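/- Fix T > 0 and C > 0. The minimal action Φ is Lipschitz continuous on the set A_C := { (s₁, t₁, s₂, t₂) ∈ ([0, ℓ] × [0, T])² : |s₁ − s₂| ≤ C(t₂ − t₁) }: there exists a constant ℓ* such that |Φ(s₁, t₁, s₂, t₂) − Φ(s₁', t₁', s₂', t₂')| ≤ ℓ* ( |s₁ − s₁'| + |t₁ − t₁'| + |s₂ − s₂'| + |t₂ − t₂'| ) for all (s₁, t₁, s₂, t₂), (s₁', t₁', s₂', t₂') ∈ A_C. -/

import Mathlib

open Set Filter MeasureTheory intervalIntegral
open scoped Interval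

/-- Superlinear coercivity: `f r / r → ∞` as `r → ∞`. -/
def Superlinear (f : ℝ → ℝ) : Prop :=
  Tendsto (fun r => f r / r) atTop atTop

/-- The minimal action `Φ(s₁, t₁, s₂, t₂)`: infimum of the action over absolutely
continuous curves `ξ : [t₁, t₂] → [0, ℓ]` (given through an integrable a.e. derivative `g`)
with `ξ(t₁) = s₁` and `ξ(t₂) = s₂`. (If `t₁ = t₂` and `s₁ = s₂` this gives `Φ = 0`.) -/
noncomputable def minAction (L : ℝ → ℝ → ℝ → ℝ) (ℓ s₁ t₁ s₂ t₂ : ℝ) : ℝ :=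
  sInf {v : ℝ | ∃ ξ g : ℝ → ℝ,
    IntervalIntegrable g volume t₁ t₂ ∧
    (∀ τ ∈ Icc t₁ t₂, ξ τ = s₁ + ∫ u in t₁..τ, g u) ∧
    (∀ τ ∈ Icc t₁ t₂, ξ τ ∈ Icc 0 ℓ) ∧
    ξ t₁ = s₁ ∧ ξ t₂ = s₂ ∧
    IntervalIntegrable (fun τ => L (ξ τ) (g τ) τ) volume t₁ t₂ ∧
    v = ∫ τ in t₁..t₂, L (ξ τ) (g τ) τ}

def aset (L : ℝ → ℝ → ℝ → ℝ) (ℓ s₁ t₁ s₂ t₂ : ℝ) : Set ℝ :=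
  {v : ℝ | ∃ ξ g : ℝ → ℝ,
    IntervalIntegrable g volume t₁ t₂ ∧
    (∀ τ ∈ Icc t₁ t₂, ξ τ = s₁ + ∫ u in t₁..τ, g u) ∧
    (∀ τ ∈ Icc t₁ t₂, ξ τ ∈ Icc 0 ℓ) ∧
    ξ t₁ = s₁ ∧ ξ t₂ = s₂ ∧
    IntervalIntegrable (fun τ => L (ξ τ) (g τ) τ) volume t₁ t₂ ∧
    v = ∫ τ in t₁..t₂, L (ξ τ) (g τ) τ}

lemma minAction_eq_sInf (L : ℝ → ℝ → ℝ → ℝ) (ℓ s₁ t₁ s₂ t₂ : ℝ) :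
    minAction L ℓ s₁ t₁ s₂ t₂ = sInf (aset L ℓ s₁ t₁ s₂ t₂) := rfl

lemma ii_congr {f h : ℝ → ℝ} {a b : ℝ} (hf : IntervalIntegrable f volume a b)
    (heq : ∀ x ∈ Ι a b, f x = h x) : IntervalIntegrable h volume a b := by
  rw [intervalIntegrable_iff] at hf ⊢
  exact hf.congr ((ae_restrict_iff' measurableSet_uIoc).mpr (Eventually.of_forall heq))

lemma ii_self {f : ℝ → ℝ} {a : ℝ} : IntervalIntegrable f volume a a := by
  rw [intervalIntegrable_iff]
  simp [uIoc]

lemma ii_sandwich {f lo hi : ℝ → ℝ} {a b : ℝ}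
    (hm : AEStronglyMeasurable f (volume.restrict (Ι a b)))
    (hlo : IntervalIntegrable lo volume a b) (hhi : IntervalIntegrable hi volume a b)
    (h1 : ∀ x ∈ Ι a b, lo x ≤ f x) (h2 : ∀ x ∈ Ι a b, f x ≤ hi x) :
    IntervalIntegrable f volume a b := by
  apply (hlo.abs.add hhi.abs).mono_fun hm
  refine (ae_restrict_iff' measurableSet_uIoc).mpr (Eventually.of_forall fun x hx => ?_)
  have e1 := h1 x hx
  have e2 := h2 x hx
  simp only [Real.norm_eq_abs]
  have : |f x| ≤ |lo x| + |hi x| := by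
    rw [abs_le]
    constructor
    · nlinarith [abs_nonneg (hi x), neg_abs_le (lo x)]
    · nlinarith [abs_nonneg (lo x), le_abs_self (hi x)]
  exact this.trans (le_abs_self _)

lemma seg_mem {lo hi x y u δ : ℝ} (hx : x ∈ Icc lo hi) (hy : y ∈ Icc lo hi)
    (hδ : 0 < δ) (hu : u ∈ Icc 0 δ) : x + u * ((y - x) / δ) ∈ Icc lo hi := by
  have hq0 : 0 ≤ u / δ := div_nonneg hu.1 hδ.le
  have hq1 : u / δ ≤ 1 := (div_le_one hδ).mpr hu.2
  have hrw : x + u * ((y - x) / δ) = x + (y - x) * (u / δ) := by ring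
  rw [hrw]
  constructor
  · nlinarith [hx.1, hy.1]
  · nlinarith [hx.2, hy.2]

lemma line_mem {M : ℝ → ℝ → ℝ → ℝ} {ℓ : ℝ}
    (Mc : Continuous fun p : ℝ × ℝ × ℝ => M p.1 p.2.1 p.2.2)
    {s₁ s₂ t₁ t₂ : ℝ} (hs₁ : s₁ ∈ Icc 0 ℓ) (hs₂ : s₂ ∈ Icc 0 ℓ) (h : t₁ < t₂) :
    (∫ τ in t₁..t₂, M (s₁ + (τ - t₁) * ((s₂ - s₁) / (t₂ - t₁))) ((s₂ - s₁) / (t₂ - t₁)) τ)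
      ∈ aset M ℓ s₁ t₁ s₂ t₂ := by
  have hne : t₂ - t₁ ≠ 0 := sub_ne_zero.mpr h.ne'
  have hpos : 0 < t₂ - t₁ := sub_pos.mpr h
  refine ⟨fun τ => s₁ + (τ - t₁) * ((s₂ - s₁) / (t₂ - t₁)), fun _ => (s₂ - s₁) / (t₂ - t₁),
    intervalIntegrable_const, fun τ _ => by
      rw [intervalIntegral.integral_const, smul_eq_mul], fun τ hτ => ?_, by ring,
      by field_simp; ring, ?_, rfl⟩
  · exact seg_mem hs₁ hs₂ hpos ⟨by linarith [hτ.1], by linarith [hτ.2]⟩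
  · have hφ : Continuous fun τ : ℝ =>
        ((s₁ + (τ - t₁) * ((s₂ - s₁) / (t₂ - t₁)), (s₂ - s₁) / (t₂ - t₁), τ) : ℝ × ℝ × ℝ) := by
      fun_prop
    have hcm := Mc.comp hφ
    simp only [Function.comp_def] at hcm
    exact hcm.intervalIntegrable _ _

lemma const_mem {M : ℝ → ℝ → ℝ → ℝ} {ℓ s₁ t₁ : ℝ} (hs₁ : s₁ ∈ Icc 0 ℓ) :
    (0 : ℝ) ∈ aset M ℓ s₁ t₁ s₁ t₁ :=
  ⟨fun _ => s₁, fun _ => 0, intervalIntegrable_const,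
    fun τ _ => by simp, fun τ _ => hs₁, rfl, rfl, ii_self, by simp⟩

lemma aset_lower {M : ℝ → ℝ → ℝ → ℝ} {ℓ s₁ t₁ s₂ t₂ m T : ℝ}
    (ht12 : t₁ ≤ t₂) (ht₁ : 0 ≤ t₁) (ht₂ : t₂ ≤ T)
    (hm : ∀ s ∈ Icc 0 ℓ, ∀ lam : ℝ, ∀ t ∈ Icc (0:ℝ) T, m ≤ M s lam t) :
    ∀ v ∈ aset M ℓ s₁ t₁ s₂ t₂, m * (t₂ - t₁) ≤ v := by
  rintro v ⟨ξ, g, hg, hint, hmem, he1, he2, hI, rfl⟩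
  have : m * (t₂ - t₁) = ∫ _ in t₁..t₂, m := by
    simp [intervalIntegral.integral_const, smul_eq_mul, mul_comm]
  rw [this]
  exact intervalIntegral.integral_mono_on ht12 intervalIntegrable_const hI
    (fun τ hτ => hm _ (hmem τ hτ) _ _ ⟨le_trans ht₁ hτ.1, le_trans hτ.2 ht₂⟩)

lemma aset_bddBelow {M : ℝ → ℝ → ℝ → ℝ} {ℓ s₁ t₁ s₂ t₂ m T : ℝ}
    (ht12 : t₁ ≤ t₂) (ht₁ : 0 ≤ t₁) (ht₂ : t₂ ≤ T)
    (hm : ∀ s ∈ Icc 0 ℓ, ∀ lam : ℝ, ∀ t ∈ Icc (0:ℝ) T, m ≤ M s lam t) :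
    BddBelow (aset M ℓ s₁ t₁ s₂ t₂) :=
  ⟨m * (t₂ - t₁), fun v hv => aset_lower ht12 ht₁ ht₂ hm v hv⟩

lemma sInf_aset_le {M : ℝ → ℝ → ℝ → ℝ} {Θ : ℝ → ℝ} {ℓ T C s₁ t₁ s₂ t₂ : ℝ}
    (Mc : Continuous fun p : ℝ × ℝ × ℝ => M p.1 p.2.1 p.2.2)
    (hΘmono : MonotoneOn Θ (Ici 0))
    (hub : ∀ s ∈ Icc 0 ℓ, ∀ lam : ℝ, ∀ t ∈ Icc (0:ℝ) T, M s lam t ≤ Θ |lam|)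
    (hbdd : BddBelow (aset M ℓ s₁ t₁ s₂ t₂))
    (hs₁ : s₁ ∈ Icc 0 ℓ) (hs₂ : s₂ ∈ Icc 0 ℓ)
    (ht₁ : 0 ≤ t₁) (ht₂ : t₂ ≤ T) (hC : 0 < C) (hAC : |s₁ - s₂| ≤ C * (t₂ - t₁)) :
    sInf (aset M ℓ s₁ t₁ s₂ t₂) ≤ Θ C * (t₂ - t₁) := by
  have ht12 : t₁ ≤ t₂ := by nlinarith [abs_nonneg (s₁ - s₂)]
  rcases eq_or_lt_of_le ht12 with heq | hlt
  · subst heq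
    have hs : s₁ = s₂ := by
      have h0 : |s₁ - s₂| ≤ 0 := by simpa using hAC
      have h1 := abs_nonneg (s₁ - s₂)
      have h2 : |s₁ - s₂| = 0 := le_antisymm h0 h1
      linarith [sub_eq_zero.mp (abs_eq_zero.mp h2)]
    subst hs
    simpa using csInf_le hbdd (const_mem hs₁)
  · have hmem := line_mem Mc hs₁ hs₂ hlt
    have hpos : 0 < t₂ - t₁ := sub_pos.mpr hlt
    have hsp : |(s₂ - s₁) / (t₂ - t₁)| ≤ C := by
      rw [abs_div, abs_of_pos hpos, div_le_iff₀ hpos]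
      rw [abs_sub_comm] at hAC
      exact hAC
    have hval : (∫ τ in t₁..t₂,
        M (s₁ + (τ - t₁) * ((s₂ - s₁) / (t₂ - t₁))) ((s₂ - s₁) / (t₂ - t₁)) τ)
        ≤ Θ C * (t₂ - t₁) := by
      have : Θ C * (t₂ - t₁) = ∫ _ in t₁..t₂, Θ C := by
        simp [intervalIntegral.integral_const, smul_eq_mul, mul_comm]
      rw [this]
      have hφ : Continuous fun τ : ℝ =>
          ((s₁ + (τ - t₁) * ((s₂ - s₁) / (t₂ - t₁)), (s₂ - s₁) / (t₂ - t₁), τ) : ℝ × ℝ × ℝ) := by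
        fun_prop
      have hcm := Mc.comp hφ
      simp only [Function.comp_def] at hcm
      refine intervalIntegral.integral_mono_on ht12
        (hcm.intervalIntegrable _ _) intervalIntegrable_const (fun τ hτ => ?_)
      have hx : s₁ + (τ - t₁) * ((s₂ - s₁) / (t₂ - t₁)) ∈ Icc 0 ℓ :=
        seg_mem hs₁ hs₂ hpos ⟨by linarith [hτ.1], by linarith [hτ.2]⟩
      have h1 := hub _ hx ((s₂ - s₁) / (t₂ - t₁)) τ ⟨le_trans ht₁ hτ.1, le_trans hτ.2 ht₂⟩
      exact h1.trans (hΘmono (mem_Ici.mpr (abs_nonneg _)) (mem_Ici.mpr ((abs_nonneg _).trans hsp)) hsp)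
    exact le_trans (csInf_le hbdd hmem) hval

lemma aset_subset {L M : ℝ → ℝ → ℝ → ℝ} {ℓ s₁ t₁ s₂ t₂ : ℝ}
    (hLM : ∀ s ∈ Icc 0 ℓ, ∀ lam : ℝ, ∀ t : ℝ, 0 ≤ t → L s lam t = M s lam t)
    (ht₁ : 0 ≤ t₁) (ht : t₁ ≤ t₂) :
    aset L ℓ s₁ t₁ s₂ t₂ ⊆ aset M ℓ s₁ t₁ s₂ t₂ := by
  rintro v ⟨ξ, g, hg, hint, hmem, he1, he2, hI, rfl⟩
  have heq : ∀ τ ∈ Icc t₁ t₂, L (ξ τ) (g τ) τ = M (ξ τ) (g τ) τ := fun τ hτ =>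
    hLM _ (hmem τ hτ) _ _ (le_trans ht₁ hτ.1)
  have hsub : Ι t₁ t₂ ⊆ Icc t₁ t₂ := by
    rw [uIoc_of_le ht]; exact Ioc_subset_Icc_self
  refine ⟨ξ, g, hg, hint, hmem, he1, he2,
    ii_congr hI (fun x hx => heq x (hsub hx)), ?_⟩
  exact intervalIntegral.integral_congr_ae
    (Eventually.of_forall fun x hx => heq x (hsub hx))

lemma aset_eq {L M : ℝ → ℝ → ℝ → ℝ} {ℓ s₁ t₁ s₂ t₂ : ℝ}
    (hLM : ∀ s ∈ Icc 0 ℓ, ∀ lam : ℝ, ∀ t : ℝ, 0 ≤ t → L s lam t = M s lam t)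
    (ht₁ : 0 ≤ t₁) (ht : t₁ ≤ t₂) :
    aset L ℓ s₁ t₁ s₂ t₂ = aset M ℓ s₁ t₁ s₂ t₂ :=
  Subset.antisymm (aset_subset hLM ht₁ ht)
    (aset_subset (fun s hs lam t htt => (hLM s hs lam t htt).symm) ht₁ ht)

/-- Enriched witness: any element of the action set has integrable `|g|` with an
explicit bound on `∫ |g|`. -/
lemma witness_bound {M : ℝ → ℝ → ℝ → ℝ} {ϑ : ℝ → ℝ} {ℓ T s₁ t₁ s₂ t₂ v r₀ : ℝ}
    (ht12 : t₁ ≤ t₂) (ht₁ : 0 ≤ t₁) (ht₂ : t₂ ≤ T)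
    (hϑmono : MonotoneOn ϑ (Ici 0))
    (hlb : ∀ s ∈ Icc 0 ℓ, ∀ lam : ℝ, ∀ t ∈ Icc (0:ℝ) T, ϑ |lam| ≤ M s lam t)
    (hr₀0 : 0 ≤ r₀) (hr₀ : ∀ r, r₀ ≤ r → r ≤ ϑ r)
    (hv : v ∈ aset M ℓ s₁ t₁ s₂ t₂) :
    ∃ ξ g : ℝ → ℝ,
      IntervalIntegrable g volume t₁ t₂ ∧
      (∀ τ ∈ Icc t₁ t₂, ξ τ = s₁ + ∫ u in t₁..τ, g u) ∧
      (∀ τ ∈ Icc t₁ t₂, ξ τ ∈ Icc 0 ℓ) ∧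
      ξ t₁ = s₁ ∧ ξ t₂ = s₂ ∧
      IntervalIntegrable (fun τ => M (ξ τ) (g τ) τ) volume t₁ t₂ ∧
      v = (∫ τ in t₁..t₂, M (ξ τ) (g τ) τ) ∧
      IntervalIntegrable (fun τ => |g τ|) volume t₁ t₂ ∧
      (∫ τ in t₁..t₂, |g τ|) ≤ (r₀ + 2 * |ϑ 0|) * (t₂ - t₁) + v := by
  obtain ⟨ξ, g, hg, hint, hmem, he1, he2, hI, hveq⟩ := hv
  have hIcc : Ι t₁ t₂ ⊆ Icc t₁ t₂ := by
    rw [uIoc_of_le ht12]; exact Ioc_subset_Icc_self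
  have htT : ∀ τ ∈ Icc t₁ t₂, τ ∈ Icc (0:ℝ) T := fun τ hτ =>
    ⟨le_trans ht₁ hτ.1, le_trans hτ.2 ht₂⟩
  -- monotone extension of ϑ
  set ϑm : ℝ → ℝ := fun x => ϑ (max x 0) with hϑm
  have hϑm_mono : Monotone ϑm := fun x y hxy =>
    hϑmono (le_max_right x 0) (le_max_right y 0) (max_le_max hxy le_rfl)
  have hϑm_eq : ∀ x : ℝ, ϑm |x| = ϑ |x| := fun x => by
    simp [hϑm, max_eq_left (abs_nonneg x)]
  -- pointwise bounds for F := fun τ => ϑ |g τ|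
  have hub' : ∀ τ ∈ Icc t₁ t₂, ϑ |g τ| ≤ M (ξ τ) (g τ) τ := fun τ hτ =>
    hlb _ (hmem τ hτ) _ _ (htT τ hτ)
  have hlo' : ∀ τ : ℝ, ϑ 0 ≤ ϑ |g τ| := fun τ =>
    hϑmono (mem_Ici.mpr le_rfl) (mem_Ici.mpr (abs_nonneg _)) (abs_nonneg _)
  -- measurability of F
  have hgm : AEStronglyMeasurable g (volume.restrict (Ι t₁ t₂)) :=
    hg.def'.aestronglyMeasurable
  have hFm : AEStronglyMeasurable (fun τ => ϑ |g τ|) (volume.restrict (Ι t₁ t₂)) := by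
    have habsm : AEMeasurable (fun τ => |g τ|) (volume.restrict (Ι t₁ t₂)) :=
      continuous_abs.measurable.comp_aemeasurable hgm.aemeasurable
    have : AEMeasurable (fun τ => ϑm |g τ|) (volume.restrict (Ι t₁ t₂)) :=
      (hϑm_mono.measurable).comp_aemeasurable habsm
    refine (this.congr ?_).aestronglyMeasurable
    exact Eventually.of_forall fun x => (hϑm_eq (g x))
  -- F is interval integrable
  have hFI : IntervalIntegrable (fun τ => ϑ |g τ|) volume t₁ t₂ := by
    refine ii_sandwich hFm intervalIntegrable_const hI
      (fun x _ => hlo' x) (fun x hx => hub' x (hIcc hx))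
  -- ∫ F ≤ v
  have hFv : (∫ τ in t₁..t₂, ϑ |g τ|) ≤ v := by
    rw [hveq]
    exact intervalIntegral.integral_mono_on ht12 hFI hI hub'
  -- pointwise |g| ≤ r₀ + |ϑ 0| - ϑ 0 + ϑ |g|
  have hpt : ∀ τ : ℝ, |g τ| ≤ (r₀ + |ϑ 0| - ϑ 0) + ϑ |g τ| := by
    intro τ
    rcases le_or_gt (|g τ|) r₀ with h | h
    · linarith [hlo' τ, abs_nonneg (ϑ 0)]
    · have h2 := hr₀ _ h.le
      linarith [le_abs_self (ϑ 0)]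
  have habs := hg.abs
  have hG : (∫ τ in t₁..t₂, |g τ|) ≤ (r₀ + 2 * |ϑ 0|) * (t₂ - t₁) + v := by
    have h1 : (∫ τ in t₁..t₂, |g τ|) ≤
        ∫ τ in t₁..t₂, ((r₀ + |ϑ 0| - ϑ 0) + ϑ |g τ|) := by
      exact intervalIntegral.integral_mono_on ht12 habs
        (intervalIntegrable_const.add hFI) (fun τ _ => hpt τ)
    have h2 : (∫ τ in t₁..t₂, ((r₀ + |ϑ 0| - ϑ 0) + ϑ |g τ|)) =
        (r₀ + |ϑ 0| - ϑ 0) * (t₂ - t₁) + ∫ τ in t₁..t₂, ϑ |g τ| := by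
      rw [intervalIntegral.integral_add intervalIntegrable_const hFI,
        intervalIntegral.integral_const, smul_eq_mul]
      ring
    have h3 : (r₀ + |ϑ 0| - ϑ 0) * (t₂ - t₁) ≤ (r₀ + 2 * |ϑ 0|) * (t₂ - t₁) := by
      have h4 : 0 ≤ t₂ - t₁ := by linarith
      nlinarith [mul_nonneg (by linarith [neg_abs_le (ϑ 0)] : (0:ℝ) ≤ |ϑ 0| + ϑ 0) h4]
    linarith
  exact ⟨ξ, g, hg, hint, hmem, he1, he2, hI, hveq, habs, hG⟩


lemma aset_nonempty {M : ℝ → ℝ → ℝ → ℝ} {ℓ C s₁ t₁ s₂ t₂ : ℝ}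
    (Mc : Continuous fun p : ℝ × ℝ × ℝ => M p.1 p.2.1 p.2.2)
    (hs₁ : s₁ ∈ Icc 0 ℓ) (hs₂ : s₂ ∈ Icc 0 ℓ) (hC : 0 < C)
    (hAC : |s₁ - s₂| ≤ C * (t₂ - t₁)) : (aset M ℓ s₁ t₁ s₂ t₂).Nonempty := by
  have h0 : 0 ≤ C * (t₂ - t₁) := le_trans (abs_nonneg _) hAC
  have ht12 : t₁ ≤ t₂ := by
    have := le_of_mul_le_mul_left (by linarith : C * 0 ≤ C * (t₂ - t₁)) hC
    linarith
  rcases eq_or_lt_of_le ht12 with he | hl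
  · subst he
    have hs : s₁ = s₂ := by
      have h0 : |s₁ - s₂| ≤ 0 := by simpa using hAC
      have h1 := abs_nonneg (s₁ - s₂)
      linarith [sub_eq_zero.mp (abs_eq_zero.mp (le_antisymm h0 h1))]
    subst hs
    exact ⟨0, const_mem hs₁⟩
  · exact ⟨_, line_mem Mc hs₁ hs₂ hl⟩

set_option maxHeartbeats 2000000 in
lemma key {ℓ T C : ℝ} {M : ℝ → ℝ → ℝ → ℝ} {ϑ Θ : ℝ → ℝ}
    (hT : 0 < T) (hC : 0 < C)
    (Mc : Continuous fun p : ℝ × ℝ × ℝ => M p.1 p.2.1 p.2.2)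
    (hϑmono : MonotoneOn ϑ (Ici 0)) (hΘmono : MonotoneOn Θ (Ici 0))
    (hbd : ∀ s ∈ Icc 0 ℓ, ∀ lam : ℝ, ∀ t ∈ Icc (0:ℝ) T, ϑ |lam| ≤ M s lam t ∧ M s lam t ≤ Θ |lam|)
    {r₀ : ℝ} (hr₀0 : 0 ≤ r₀) (hr₀ : ∀ r, r₀ ≤ r → r ≤ ϑ r)
    {α β ε : ℝ} (hα : 0 ≤ α) (hβ : 0 ≤ β) (hε : 0 < ε) (hεT : ε ≤ T)
    (hlip : ∀ s ∈ Icc 0 ℓ, ∀ lam : ℝ, ∀ u ∈ Icc (0:ℝ) T, ∀ w ∈ Icc (0:ℝ) T, |w - u| < ε →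
        M s lam u - M s lam w ≤ (α * |lam| + β) * |w - u|)
    {s₁ s₂ t₁ t₂ s₁' s₂' t₁' t₂' d : ℝ}
    (hs₁ : s₁ ∈ Icc 0 ℓ) (hs₂ : s₂ ∈ Icc 0 ℓ) (hs₁' : s₁' ∈ Icc 0 ℓ) (hs₂' : s₂' ∈ Icc 0 ℓ)
    (ht₁ : t₁ ∈ Icc 0 T) (ht₂ : t₂ ∈ Icc 0 T) (ht₁' : t₁' ∈ Icc 0 T) (ht₂' : t₂' ∈ Icc 0 T)
    (hAC : |s₁ - s₂| ≤ C * (t₂ - t₁)) (hAC' : |s₁' - s₂'| ≤ C * (t₂' - t₁'))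
    (hd : |s₁ - s₁'| + |t₁ - t₁'| + |s₂ - s₂'| + |t₂ - t₂'| ≤ d)
    (hd0 : 0 < d) (hd9 : 9 * d < ε) (hΔ : 40 * d ≤ t₂ - t₁) :
    sInf (aset M ℓ s₁ t₁ s₂ t₂) ≤ sInf (aset M ℓ s₁' t₁' s₂' t₂') +
      (1 + 8 * |ϑ 0| + 10 * max (Θ (max (4 * (r₀ + 2 * |ϑ 0| + max (Θ C) 0) + 1) 1)) 0
        + 16 * (α * ((r₀ + 2 * |ϑ 0| + max (Θ C) 0) * T + T) + β * T)) * d := by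
  -- abbreviations for the constants
  set G₁ : ℝ := r₀ + 2 * |ϑ 0| + max (Θ C) 0 with hG₁def
  set cstar : ℝ := 4 * G₁ + 1 with hcstardef
  set Θcap : ℝ := max (Θ (max cstar 1)) 0 with hΘcapdef
  have hG₁0 : 0 ≤ G₁ := by positivity
  have hΘcap0 : 0 ≤ Θcap := le_max_right _ _
  -- basic distances
  have habs1 : |s₁ - s₁'| ≤ d := by
    have := abs_nonneg (t₁ - t₁'); have := abs_nonneg (s₂ - s₂'); have := abs_nonneg (t₂ - t₂')
    linarith
  have habs2 : |t₁ - t₁'| ≤ d := by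
    have := abs_nonneg (s₁ - s₁'); have := abs_nonneg (s₂ - s₂'); have := abs_nonneg (t₂ - t₂')
    linarith
  have habs3 : |s₂ - s₂'| ≤ d := by
    have := abs_nonneg (s₁ - s₁'); have := abs_nonneg (t₁ - t₁'); have := abs_nonneg (t₂ - t₂')
    linarith
  have habs4 : |t₂ - t₂'| ≤ d := by
    have := abs_nonneg (s₁ - s₁'); have := abs_nonneg (t₁ - t₁'); have := abs_nonneg (s₂ - s₂')
    linarith
  obtain ⟨h2a, h2b⟩ := abs_le.mp habs2
  obtain ⟨h4a, h4b⟩ := abs_le.mp habs4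
  have ht12 : t₁ ≤ t₂ := by linarith
  have hdT : d ≤ T := by linarith
  have hΔ'38 : 38 * d ≤ t₂' - t₁' := by linarith
  have ht12' : t₁' ≤ t₂' := by linarith
  have hlt' : t₁' < t₂' := by linarith
  -- lower bound for M
  have hmlb : ∀ s ∈ Icc 0 ℓ, ∀ lam : ℝ, ∀ t ∈ Icc (0:ℝ) T, ϑ 0 ≤ M s lam t := by
    intro s hs lam t ht
    exact le_trans (hϑmono (mem_Ici.mpr le_rfl) (mem_Ici.mpr (abs_nonneg _)) (abs_nonneg _))
      (hbd s hs lam t ht).1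
  have hbdd' : BddBelow (aset M ℓ s₁' t₁' s₂' t₂') :=
    aset_bddBelow ht12' ht₁'.1 ht₂'.2 hmlb
  have hbdd : BddBelow (aset M ℓ s₁ t₁ s₂ t₂) :=
    aset_bddBelow ht12 ht₁.1 ht₂.2 hmlb
  have hne' : (aset M ℓ s₁' t₁' s₂' t₂').Nonempty := ⟨_, line_mem Mc hs₁' hs₂' hlt'⟩
  have hΦ'ub : sInf (aset M ℓ s₁' t₁' s₂' t₂') ≤ Θ C * (t₂' - t₁') :=
    sInf_aset_le Mc hΘmono (fun s hs lam t ht => (hbd s hs lam t ht).2) hbdd'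
      hs₁' hs₂' ht₁'.1 ht₂'.2 hC hAC'
  obtain ⟨v, hv, hvlt⟩ := exists_lt_of_csInf_lt hne'
    (lt_add_of_pos_right (sInf (aset M ℓ s₁' t₁' s₂' t₂')) hd0)
  obtain ⟨ξ', g', hg', hint', hmem', he1', he2', hI', hveq', habs', hGv⟩ :=
    witness_bound ht12' ht₁'.1 ht₂'.2 hϑmono (fun s hs lam t ht => (hbd s hs lam t ht).1)
      hr₀0 hr₀ hv
  have hvub : v ≤ max (Θ C) 0 * (t₂' - t₁') + d := by
    have h1 : Θ C * (t₂' - t₁') ≤ max (Θ C) 0 * (t₂' - t₁') :=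
      mul_le_mul_of_nonneg_right (le_max_left _ _) (by linarith)
    linarith [hvlt.le, hΦ'ub]
  set I0 : ℝ := ∫ τ in t₁'..t₂', |g' τ| with hI0def
  have hI0nn : 0 ≤ I0 := intervalIntegral.integral_nonneg ht12' (fun u _ => abs_nonneg _)
  have hG : I0 ≤ G₁ * (t₂' - t₁') + d := by
    have e0 : (r₀ + 2 * |ϑ 0|) * (t₂' - t₁') + (max (Θ C) 0 * (t₂' - t₁') + d)
        = G₁ * (t₂' - t₁') + d := by rw [hG₁def]; ring
    linarith [hGv, hvub]
  have hGT : I0 ≤ G₁ * T + T := by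
    have e0 : G₁ * (t₂' - t₁') ≤ G₁ * T :=
      mul_le_mul_of_nonneg_left (by linarith [ht₂'.2, ht₁'.1]) hG₁0
    linarith [hG]
  -- subinterval inclusion helper
  have hsubI : ∀ x y : ℝ, t₁' ≤ x → x ≤ y → y ≤ t₂' → Ι x y ⊆ Ι t₁' t₂' := by
    intro x y h1 h2 h3
    rw [uIoc_of_le h2, uIoc_of_le ht12']
    exact Ioc_subset_Ioc (by linarith) h3
  ---- pigeonhole: a good window [a, a+8d]
  have hwindow : ∃ aa : ℝ, t₁' ≤ aa ∧ aa + 8 * d ≤ t₂' ∧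
      (∫ τ in aa..(aa + 8 * d), |g' τ|) ≤ (16 * G₁ + 1) * d := by
    set n : ℕ := ⌊(t₂' - t₁') / (8 * d)⌋₊ with hndef
    have h8d : (0:ℝ) < 8 * d := by linarith
    have hn4 : (4:ℕ) ≤ n := by
      apply Nat.le_floor
      rw [le_div_iff₀ h8d]
      push_cast
      linarith
    have hn0 : 0 < n := by omega
    have hnR : (4:ℝ) ≤ (n:ℝ) := by exact_mod_cast hn4
    have hnR1 : (1:ℝ) ≤ (n:ℝ) := by linarith
    have hnΔ : (n:ℝ) * (8 * d) ≤ t₂' - t₁' := by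
      rw [← le_div_iff₀ h8d]
      exact Nat.floor_le (div_nonneg (by linarith) h8d.le)
    have hnΔ2 : t₂' - t₁' < 16 * d * (n:ℝ) := by
      have h1 : (t₂' - t₁') / (8 * d) < (n:ℝ) + 1 := Nat.lt_floor_add_one _
      rw [div_lt_iff₀ h8d] at h1
      have e : ((n:ℝ) + 1) * (8 * d) = 8 * d * (n:ℝ) + 8 * d := by ring
      have m : 8 * d * (1:ℝ) ≤ 8 * d * (n:ℝ) := mul_le_mul_of_nonneg_left hnR1 h8d.le
      rw [e] at h1
      linarith
    set ck : ℕ → ℝ := fun k => t₁' + (k : ℝ) * (8 * d) with hckdef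
    have hck0 : ck 0 = t₁' := by simp [hckdef]
    have hcklo : ∀ k : ℕ, t₁' ≤ ck k := by
      intro k
      rw [hckdef]
      have : (0:ℝ) ≤ (k:ℝ) * (8 * d) := by positivity
      simpa using this
    have hckhi : ∀ k : ℕ, k ≤ n → ck k ≤ t₂' := by
      intro k hk
      rw [hckdef]
      have m : (k:ℝ) * (8 * d) ≤ (n:ℝ) * (8 * d) :=
        mul_le_mul_of_nonneg_right (by exact_mod_cast hk) h8d.le
      simp only []
      linarith
    have hckstep : ∀ k : ℕ, ck (k+1) = ck k + 8 * d := by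
      intro k
      rw [hckdef]
      push_cast
      ring
    have hckmono : ∀ k : ℕ, ck k ≤ ck (k+1) := fun k => by rw [hckstep]; linarith
    have hIIk : ∀ k, k < n → IntervalIntegrable (fun τ => |g' τ|) volume (ck k) (ck (k+1)) := by
      intro k hk
      exact habs'.mono_set' (hsubI _ _ (hcklo k) (hckmono k) (hckhi (k+1) hk))
    have hsum : ∑ k ∈ Finset.range n, (∫ τ in (ck k)..(ck (k+1)), |g' τ|)
        = ∫ τ in (ck 0)..(ck n), |g' τ| :=
      intervalIntegral.sum_integral_adjacent_intervals hIIk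
    have htail : (∫ τ in (ck 0)..(ck n), |g' τ|) ≤ I0 := by
      rw [hck0, hI0def]
      have hadd : (∫ τ in t₁'..(ck n), |g' τ|) + (∫ τ in (ck n)..t₂', |g' τ|)
          = ∫ τ in t₁'..t₂', |g' τ| :=
        intervalIntegral.integral_add_adjacent_intervals
          (habs'.mono_set' (hsubI _ _ le_rfl (hcklo n) (hckhi n le_rfl)))
          (habs'.mono_set' (hsubI _ _ (hcklo n) (hckhi n le_rfl) le_rfl))
      have hnn : 0 ≤ ∫ τ in (ck n)..t₂', |g' τ| :=
        intervalIntegral.integral_nonneg (hckhi n le_rfl) (fun u _ => abs_nonneg _)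
      linarith
    have havg : I0 / (n:ℝ) ≤ (16 * G₁ + 1) * d := by
      rw [div_le_iff₀ (by positivity : (0:ℝ) < (n:ℝ))]
      have m1 : G₁ * (t₂' - t₁') ≤ G₁ * (16 * d * (n:ℝ)) :=
        mul_le_mul_of_nonneg_left hnΔ2.le hG₁0
      have m2 : d * (1:ℝ) ≤ d * (n:ℝ) := mul_le_mul_of_nonneg_left hnR1 hd0.le
      have e : (16 * G₁ + 1) * d * (n:ℝ) = G₁ * (16 * d * (n:ℝ)) + d * (n:ℝ) := by ring
      rw [e]
      linarith [hG]
    obtain ⟨k, hk, hkle⟩ := Finset.exists_le_of_sum_le (f := fun k =>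
        ∫ τ in (ck k)..(ck (k+1)), |g' τ|) (g := fun _ => I0 / (n:ℝ))
      (Finset.nonempty_range_iff.mpr hn0.ne') (by
        rw [Finset.sum_const, Finset.card_range, nsmul_eq_mul,
          mul_div_cancel₀ _ (by positivity : ((n:ℝ)) ≠ 0)]
        rw [hsum]
        exact htail)
    refine ⟨ck k, hcklo k, ?_, ?_⟩
    · rw [← hckstep k]
      exact hckhi (k+1) (Finset.mem_range.mp hk)
    · rw [show ck k + 8 * d = ck (k+1) from (hckstep k).symm]
      exact le_trans hkle havg
  obtain ⟨a, ha1, hbt2, hwin⟩ := hwindow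
  set b : ℝ := a + 8 * d with hbdef
  have hab : a ≤ b := by rw [hbdef]; linarith
  have hat : a ≤ t₂' := by linarith
  have hbt : t₁' ≤ b := by linarith
  ---- breakpoints
  set D : ℝ := (t₂' - t₁') - (t₂ - t₁) + 2 * d with hDdef
  have hD0 : 0 ≤ D := by rw [hDdef]; linarith
  have hD4 : D ≤ 4 * d := by rw [hDdef]; linarith
  set τ₁ : ℝ := t₁ + d with hτ₁def
  set τ₂ : ℝ := τ₁ + (a - t₁') with hτ₂def
  set τ₃ : ℝ := τ₂ + (8 * d - D) with hτ₃def
  set τ₄ : ℝ := τ₃ + (t₂' - b) with hτ₄def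
  have hτ₄ : τ₄ = t₂ - d := by
    rw [hτ₄def, hτ₃def, hτ₂def, hτ₁def, hbdef, hDdef]; ring
  have ho1 : t₁ < τ₁ := by rw [hτ₁def]; linarith
  have ho2 : τ₁ ≤ τ₂ := by rw [hτ₂def]; linarith
  have ho3 : τ₂ < τ₃ := by rw [hτ₃def]; linarith
  have ho4 : τ₃ ≤ τ₄ := by rw [hτ₄def]; linarith
  have ho5 : τ₄ < t₂ := by rw [hτ₄]; linarith
  have hIccT : ∀ σ : ℝ, t₁ ≤ σ → σ ≤ t₂ → σ ∈ Icc (0:ℝ) T :=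
    fun σ h1 h2 => ⟨le_trans ht₁.1 h1, le_trans h2 ht₂.2⟩
  ---- shifts
  set sh₁ : ℝ := τ₁ - t₁' with hsh₁def
  set sh₂ : ℝ := τ₃ - b with hsh₂def
  have hsh₁ : |sh₁| ≤ 2 * d := by
    rw [hsh₁def, hτ₁def]
    rw [abs_le]; constructor <;> linarith
  have hsh₂' : sh₂ = (t₁ - t₁') + (d - D) := by
    rw [hsh₂def, hτ₃def, hτ₂def, hτ₁def, hbdef]; ring
  have hsh₂ : |sh₂| ≤ 8 * d := by
    rw [hsh₂']
    rw [abs_le]; constructor <;> linarith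
  ---- speeds
  set c₁ : ℝ := (s₁' - s₁) / d with hc₁def
  set c₅ : ℝ := (s₂ - s₂') / d with hc₅def
  have hdisp : |ξ' b - ξ' a| ≤ ∫ τ in a..b, |g' τ| := by
    have hIa := hint' a ⟨ha1, hat⟩
    have hIb := hint' b ⟨hbt, hbt2⟩
    have hadd : (∫ u in t₁'..a, g' u) + (∫ u in a..b, g' u) = ∫ u in t₁'..b, g' u :=
      intervalIntegral.integral_add_adjacent_intervals
        (hg'.mono_set' (hsubI _ _ le_rfl ha1 hat))
        (hg'.mono_set' (hsubI _ _ ha1 hab hbt2))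
    have e : ξ' b - ξ' a = ∫ u in a..b, g' u := by
      rw [hIa, hIb]; linarith
    rw [e]
    exact intervalIntegral.abs_integral_le_integral_abs hab
  set c₃ : ℝ := (ξ' b - ξ' a) / (8 * d - D) with hc₃def
  have h8D : 4 * d ≤ 8 * d - D := by linarith
  have h8Dpos : 0 < 8 * d - D := by linarith
  have hc₁ : |c₁| ≤ 1 := by
    rw [hc₁def, abs_div, abs_of_pos hd0, div_le_one hd0, abs_sub_comm]
    exact habs1
  have hc₅ : |c₅| ≤ 1 := by
    rw [hc₅def, abs_div, abs_of_pos hd0, div_le_one hd0]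
    exact habs3
  have hcstar0 : 0 ≤ cstar := by rw [hcstardef]; linarith
  have hc₃ : |c₃| ≤ cstar := by
    rw [hc₃def, abs_div, abs_of_pos h8Dpos, div_le_iff₀ h8Dpos]
    have e1 : |ξ' b - ξ' a| ≤ (16 * G₁ + 1) * d := hdisp.trans hwin
    have e2 : (16 * G₁ + 1) * d ≤ cstar * (4 * d) := by
      rw [hcstardef]
      have := mul_nonneg hG₁0 hd0.le
      ring_nf
      linarith
    have e3 : cstar * (4 * d) ≤ cstar * (8 * d - D) :=
      mul_le_mul_of_nonneg_left h8D hcstar0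
    linarith
  ---- the new curve
  set gt : ℝ → ℝ := fun σ =>
    if σ ≤ τ₁ then c₁ else if σ ≤ τ₂ then g' (σ - sh₁)
    else if σ ≤ τ₃ then c₃ else if σ ≤ τ₄ then g' (σ - sh₂) else c₅ with hgtdef
  set xt : ℝ → ℝ := fun σ =>
    if σ ≤ τ₁ then s₁ + (σ - t₁) * c₁ else if σ ≤ τ₂ then ξ' (σ - sh₁)
    else if σ ≤ τ₃ then ξ' a + (σ - τ₂) * c₃ else if σ ≤ τ₄ then ξ' (σ - sh₂)
    else s₂' + (σ - τ₄) * c₅ with hxtdef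
  have hgt1 : ∀ σ, σ ≤ τ₁ → gt σ = c₁ := fun σ h => by rw [hgtdef]; simp [h]
  have hgt2 : ∀ σ, τ₁ < σ → σ ≤ τ₂ → gt σ = g' (σ - sh₁) := fun σ h h' => by
    rw [hgtdef]; simp [h.not_ge, h']
  have hgt3 : ∀ σ, τ₂ < σ → σ ≤ τ₃ → gt σ = c₃ := fun σ h h' => by
    rw [hgtdef]; simp [(lt_of_le_of_lt ho2 h).not_ge, h.not_ge, h']
  have hgt4 : ∀ σ, τ₃ < σ → σ ≤ τ₄ → gt σ = g' (σ - sh₂) := fun σ h h' => by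
    rw [hgtdef]
    simp [(lt_of_le_of_lt ho2 (lt_of_lt_of_le ho3 h.le)).not_ge,
      (lt_of_lt_of_le ho3 h.le).not_ge, h.not_ge, h']
  have hgt5 : ∀ σ, τ₄ < σ → gt σ = c₅ := fun σ h => by
    rw [hgtdef]
    simp [(lt_of_le_of_lt ho2 (lt_of_le_of_lt (le_trans ho3.le ho4) h)).not_ge,
      (lt_of_le_of_lt (le_trans ho3.le ho4) h).not_ge, (lt_of_le_of_lt ho4 h).not_ge, h.not_ge]
  have hxt1 : ∀ σ, σ ≤ τ₁ → xt σ = s₁ + (σ - t₁) * c₁ := fun σ h => by rw [hxtdef]; simp [h]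
  have hxt2 : ∀ σ, τ₁ < σ → σ ≤ τ₂ → xt σ = ξ' (σ - sh₁) := fun σ h h' => by
    rw [hxtdef]; simp [h.not_ge, h']
  have hxt3 : ∀ σ, τ₂ < σ → σ ≤ τ₃ → xt σ = ξ' a + (σ - τ₂) * c₃ := fun σ h h' => by
    rw [hxtdef]; simp [(lt_of_le_of_lt ho2 h).not_ge, h.not_ge, h']
  have hxt4 : ∀ σ, τ₃ < σ → σ ≤ τ₄ → xt σ = ξ' (σ - sh₂) := fun σ h h' => by
    rw [hxtdef]
    simp [(lt_of_le_of_lt ho2 (lt_of_lt_of_le ho3 h.le)).not_ge,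
      (lt_of_lt_of_le ho3 h.le).not_ge, h.not_ge, h']
  have hxt5 : ∀ σ, τ₄ < σ → xt σ = s₂' + (σ - τ₄) * c₅ := fun σ h => by
    rw [hxtdef]
    simp [(lt_of_le_of_lt ho2 (lt_of_le_of_lt (le_trans ho3.le ho4) h)).not_ge,
      (lt_of_le_of_lt (le_trans ho3.le ho4) h).not_ge, (lt_of_le_of_lt ho4 h).not_ge, h.not_ge]
  
  ---- interval inclusion helper (general)
  have hIof : ∀ p q x y : ℝ, p ≤ x → x ≤ y → y ≤ q → Ι x y ⊆ Ι p q := by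
    intro p q x y h1 h2 h3
    rw [uIoc_of_le h2, uIoc_of_le (h1.trans (h2.trans h3))]
    exact Ioc_subset_Ioc h1 h3
  ---- endpoint equalities for the shifts
  have esh1a : t₁' + sh₁ = τ₁ := by rw [hsh₁def]; ring
  have esh1b : a + sh₁ = τ₂ := by rw [hsh₁def, hτ₂def]; ring
  have esh2a : b + sh₂ = τ₃ := by rw [hsh₂def]; ring
  have esh2b : t₂' + sh₂ = τ₄ := by rw [hsh₂def, hτ₄def]; ring
  have esh1a' : τ₁ - sh₁ = t₁' := by linarith
  have esh1b' : τ₂ - sh₁ = a := by linarith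
  have esh2a' : τ₃ - sh₂ = b := by linarith
  have esh2b' : τ₄ - sh₂ = t₂' := by linarith
  ---- integrability of the pieces of gt
  have hshift2 : IntervalIntegrable (fun x => g' (x - sh₁)) volume τ₁ τ₂ := by
    have base : IntervalIntegrable g' volume t₁' a :=
      hg'.mono_set' (hsubI _ _ le_rfl ha1 hat)
    have h := base.comp_sub_right sh₁
    rwa [esh1a, esh1b] at h
  have hshift4 : IntervalIntegrable (fun x => g' (x - sh₂)) volume τ₃ τ₄ := by
    have base : IntervalIntegrable g' volume b t₂' :=
      hg'.mono_set' (hsubI _ _ hbt hbt2 le_rfl)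
    have h := base.comp_sub_right sh₂
    rwa [esh2a, esh2b] at h
  have pg1 : IntervalIntegrable gt volume t₁ τ₁ :=
    ii_congr intervalIntegrable_const (fun x hx => by
      rw [uIoc_of_le ho1.le] at hx; exact (hgt1 x hx.2).symm)
  have pg2 : IntervalIntegrable gt volume τ₁ τ₂ :=
    ii_congr hshift2 (fun x hx => by
      rw [uIoc_of_le ho2] at hx; exact (hgt2 x hx.1 hx.2).symm)
  have pg3 : IntervalIntegrable gt volume τ₂ τ₃ :=
    ii_congr intervalIntegrable_const (fun x hx => by
      rw [uIoc_of_le ho3.le] at hx; exact (hgt3 x hx.1 hx.2).symm)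
  have pg4 : IntervalIntegrable gt volume τ₃ τ₄ :=
    ii_congr hshift4 (fun x hx => by
      rw [uIoc_of_le ho4] at hx; exact (hgt4 x hx.1 hx.2).symm)
  have pg5 : IntervalIntegrable gt volume τ₄ t₂ :=
    ii_congr intervalIntegrable_const (fun x hx => by
      rw [uIoc_of_le ho5.le] at hx; exact (hgt5 x hx.1).symm)
  have pgt : IntervalIntegrable gt volume t₁ t₂ :=
    (((pg1.trans pg2).trans pg3).trans pg4).trans pg5
  ---- integral identities
  have hF1 : ∀ σ, t₁ ≤ σ → σ ≤ τ₁ → (∫ u in t₁..σ, gt u) = (σ - t₁) * c₁ := by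
    intro σ h1 h2
    have e : EqOn gt (fun _ => c₁) (uIcc t₁ σ) := fun x hx => by
      rw [uIcc_of_le h1] at hx; exact hgt1 x (le_trans hx.2 h2)
    rw [intervalIntegral.integral_congr e, intervalIntegral.integral_const, smul_eq_mul]
  have hI1 : (∫ u in t₁..τ₁, gt u) = s₁' - s₁ := by
    rw [hF1 τ₁ ho1.le le_rfl]
    have e : τ₁ - t₁ = d := by rw [hτ₁def]; ring
    rw [e, hc₁def]
    field_simp
  have hF2 : ∀ σ, τ₁ ≤ σ → σ ≤ τ₂ → (∫ u in τ₁..σ, gt u) = ξ' (σ - sh₁) - s₁' := by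
    intro σ h1 h2
    have e : (∫ u in τ₁..σ, gt u) = ∫ u in τ₁..σ, g' (u - sh₁) :=
      intervalIntegral.integral_congr_ae (Eventually.of_forall (fun x hx => by
        rw [uIoc_of_le h1] at hx; exact hgt2 x hx.1 (le_trans hx.2 h2)))
    have ecv : (∫ u in τ₁..σ, g' (u - sh₁)) = ∫ u in (τ₁ - sh₁)..(σ - sh₁), g' u :=
      intervalIntegral.integral_comp_sub_right _ sh₁
    rw [e, ecv, esh1a']
    have hmemσ : σ - sh₁ ∈ Icc t₁' t₂' := by
      constructor
      · rw [hsh₁def]; linarith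
      · rw [hsh₁def]; linarith [hτ₂def]
    have := hint' (σ - sh₁) hmemσ
    linarith
  have hI2 : (∫ u in τ₁..τ₂, gt u) = ξ' a - s₁' := by
    rw [hF2 τ₂ ho2 le_rfl, esh1b']
  have hF3 : ∀ σ, τ₂ ≤ σ → σ ≤ τ₃ → (∫ u in τ₂..σ, gt u) = (σ - τ₂) * c₃ := by
    intro σ h1 h2
    have e : (∫ u in τ₂..σ, gt u) = ∫ u in τ₂..σ, (fun _ => c₃) u :=
      intervalIntegral.integral_congr_ae (Eventually.of_forall (fun x hx => by
        rw [uIoc_of_le h1] at hx; exact hgt3 x hx.1 (le_trans hx.2 h2)))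
    rw [e, intervalIntegral.integral_const, smul_eq_mul]
  have hI3 : (∫ u in τ₂..τ₃, gt u) = ξ' b - ξ' a := by
    rw [hF3 τ₃ ho3.le le_rfl]
    have e : τ₃ - τ₂ = 8 * d - D := by rw [hτ₃def]; ring
    rw [e, hc₃def]
    field_simp
  have hF4 : ∀ σ, τ₃ ≤ σ → σ ≤ τ₄ → (∫ u in τ₃..σ, gt u) = ξ' (σ - sh₂) - ξ' b := by
    intro σ h1 h2
    have e : (∫ u in τ₃..σ, gt u) = ∫ u in τ₃..σ, g' (u - sh₂) :=
      intervalIntegral.integral_congr_ae (Eventually.of_forall (fun x hx => by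
        rw [uIoc_of_le h1] at hx; exact hgt4 x hx.1 (le_trans hx.2 h2)))
    have ecv : (∫ u in τ₃..σ, g' (u - sh₂)) = ∫ u in (τ₃ - sh₂)..(σ - sh₂), g' u :=
      intervalIntegral.integral_comp_sub_right _ sh₂
    rw [e, ecv, esh2a']
    have hby : b ≤ σ - sh₂ := by linarith
    have hyt : σ - sh₂ ≤ t₂' := by linarith
    have h5 := hint' (σ - sh₂) ⟨le_trans hbt hby, hyt⟩
    have h6 := hint' b ⟨hbt, hbt2⟩
    have hadd : (∫ u in t₁'..b, g' u) + (∫ u in b..(σ - sh₂), g' u)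
        = ∫ u in t₁'..(σ - sh₂), g' u :=
      intervalIntegral.integral_add_adjacent_intervals
        (hg'.mono_set' (hsubI _ _ le_rfl hbt hbt2))
        (hg'.mono_set' (hsubI _ _ hbt hby hyt))
    linarith
  have hI4 : (∫ u in τ₃..τ₄, gt u) = s₂' - ξ' b := by
    rw [hF4 τ₄ ho4 le_rfl, esh2b', he2']
  have hF5 : ∀ σ, τ₄ ≤ σ → σ ≤ t₂ → (∫ u in τ₄..σ, gt u) = (σ - τ₄) * c₅ := by
    intro σ h1 h2
    have e : (∫ u in τ₄..σ, gt u) = ∫ u in τ₄..σ, (fun _ => c₅) u :=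
      intervalIntegral.integral_congr_ae (Eventually.of_forall (fun x hx => by
        rw [uIoc_of_le h1] at hx; exact hgt5 x hx.1))
    rw [e, intervalIntegral.integral_const, smul_eq_mul]
  have hC2 : (∫ u in t₁..τ₂, gt u) = ξ' a - s₁ := by
    rw [← intervalIntegral.integral_add_adjacent_intervals pg1 pg2, hI1, hI2]; ring
  have hC3 : (∫ u in t₁..τ₃, gt u) = ξ' b - s₁ := by
    rw [← intervalIntegral.integral_add_adjacent_intervals (pg1.trans pg2) pg3, hC2, hI3]; ring
  have hC4 : (∫ u in t₁..τ₄, gt u) = s₂' - s₁ := by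
    rw [← intervalIntegral.integral_add_adjacent_intervals ((pg1.trans pg2).trans pg3) pg4,
      hC3, hI4]
    ring
  ---- the integral identity for xt
  have hint_new : ∀ σ ∈ Icc t₁ t₂, xt σ = s₁ + ∫ u in t₁..σ, gt u := by
    intro σ hσ
    rcases le_or_gt σ τ₁ with hb1 | hb1
    · rw [hxt1 σ hb1, hF1 σ hσ.1 hb1]
    rcases le_or_gt σ τ₂ with hb2 | hb2
    · rw [hxt2 σ hb1 hb2,
        ← intervalIntegral.integral_add_adjacent_intervals pg1
          (pg2.mono_set' (hIof τ₁ τ₂ τ₁ σ le_rfl hb1.le hb2)), hI1, hF2 σ hb1.le hb2]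
      ring
    rcases le_or_gt σ τ₃ with hb3 | hb3
    · rw [hxt3 σ hb2 hb3,
        ← intervalIntegral.integral_add_adjacent_intervals (pg1.trans pg2)
          (pg3.mono_set' (hIof τ₂ τ₃ τ₂ σ le_rfl hb2.le hb3)), hC2, hF3 σ hb2.le hb3]
      ring
    rcases le_or_gt σ τ₄ with hb4 | hb4
    · rw [hxt4 σ hb3 hb4,
        ← intervalIntegral.integral_add_adjacent_intervals ((pg1.trans pg2).trans pg3)
          (pg4.mono_set' (hIof τ₃ τ₄ τ₃ σ le_rfl hb3.le hb4)), hC3, hF4 σ hb3.le hb4]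
      ring
    · rw [hxt5 σ hb4,
        ← intervalIntegral.integral_add_adjacent_intervals (((pg1.trans pg2).trans pg3).trans pg4)
          (pg5.mono_set' (hIof τ₄ t₂ τ₄ σ le_rfl hb4.le hσ.2)), hC4, hF5 σ hb4.le hσ.2]
      ring
  ---- range membership
  have hmem_new : ∀ σ ∈ Icc t₁ t₂, xt σ ∈ Icc 0 ℓ := by
    intro σ hσ
    rcases le_or_gt σ τ₁ with hb1 | hb1
    · rw [hxt1 σ hb1, hc₁def]
      exact seg_mem hs₁ hs₁' hd0 ⟨by linarith [hσ.1], by linarith [hτ₁def]⟩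
    rcases le_or_gt σ τ₂ with hb2 | hb2
    · rw [hxt2 σ hb1 hb2]
      exact hmem' _ ⟨by rw [hsh₁def]; linarith, by rw [hsh₁def]; linarith [hτ₂def]⟩
    rcases le_or_gt σ τ₃ with hb3 | hb3
    · rw [hxt3 σ hb2 hb3, hc₃def]
      exact seg_mem (hmem' a ⟨ha1, hat⟩) (hmem' b ⟨hbt, hbt2⟩) h8Dpos
        ⟨by linarith, by linarith [hτ₃def]⟩
    rcases le_or_gt σ τ₄ with hb4 | hb4
    · rw [hxt4 σ hb3 hb4]
      exact hmem' _ ⟨by linarith, by linarith⟩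
    · rw [hxt5 σ hb4, hc₅def]
      exact seg_mem hs₂' hs₂ hd0 ⟨by linarith, by linarith [hτ₄, hσ.2]⟩
  have he1_new : xt t₁ = s₁ := by rw [hxt1 t₁ ho1.le]; ring
  have he2_new : xt t₂ = s₂ := by
    rw [hxt5 t₂ ho5]
    have e : t₂ - τ₄ = d := by rw [hτ₄]; ring
    rw [e, hc₅def]
    field_simp
    ring
  ---- continuity of ξ' on [t₁', t₂']
  have hξc : ContinuousOn ξ' (Icc t₁' t₂') := by
    have hP0 := intervalIntegral.continuousOn_primitive_interval' hg'
      (left_mem_uIcc (a := t₁') (b := t₂'))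
    rw [uIcc_of_le ht12'] at hP0
    exact (continuousOn_const.add hP0).congr (fun y hy => hint' y hy)
  ---- cost pieces: continuity for the straight segments
  have hf₁c : Continuous fun σ : ℝ => M (s₁ + (σ - t₁) * c₁) c₁ σ := by
    have hφ : Continuous fun σ : ℝ => ((s₁ + (σ - t₁) * c₁, c₁, σ) : ℝ × ℝ × ℝ) := by fun_prop
    have h := Mc.comp hφ
    simpa [Function.comp_def] using h
  have hf₃c : Continuous fun σ : ℝ => M (ξ' a + (σ - τ₂) * c₃) c₃ σ := by
    have hφ : Continuous fun σ : ℝ => ((ξ' a + (σ - τ₂) * c₃, c₃, σ) : ℝ × ℝ × ℝ) := by fun_prop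
    have h := Mc.comp hφ
    simpa [Function.comp_def] using h
  have hf₅c : Continuous fun σ : ℝ => M (s₂' + (σ - τ₄) * c₅) c₅ σ := by
    have hφ : Continuous fun σ : ℝ => ((s₂' + (σ - τ₄) * c₅, c₅, σ) : ℝ × ℝ × ℝ) := by fun_prop
    have h := Mc.comp hφ
    simpa [Function.comp_def] using h
  have pF1 : IntervalIntegrable (fun σ => M (xt σ) (gt σ) σ) volume t₁ τ₁ :=
    ii_congr (hf₁c.intervalIntegrable _ _) (fun x hx => by
      rw [uIoc_of_le ho1.le] at hx
      rw [hxt1 x hx.2, hgt1 x hx.2])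
  have pF3 : IntervalIntegrable (fun σ => M (xt σ) (gt σ) σ) volume τ₂ τ₃ :=
    ii_congr (hf₃c.intervalIntegrable _ _) (fun x hx => by
      rw [uIoc_of_le ho3.le] at hx
      rw [hxt3 x hx.1 hx.2, hgt3 x hx.1 hx.2])
  have pF5 : IntervalIntegrable (fun σ => M (xt σ) (gt σ) σ) volume τ₄ t₂ :=
    ii_congr (hf₅c.intervalIntegrable _ _) (fun x hx => by
      rw [uIoc_of_le ho5.le] at hx
      rw [hxt5 x hx.1, hgt5 x hx.1])
  ---- segment 2: sandwich
  have hmemsh1 : ∀ x : ℝ, τ₁ ≤ x → x ≤ τ₂ → x - sh₁ ∈ Icc t₁' t₂' := by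
    intro x h1 h2
    exact ⟨by rw [hsh₁def]; linarith, by rw [hsh₁def]; linarith [hτ₂def]⟩
  have hmemsh2 : ∀ x : ℝ, τ₃ ≤ x → x ≤ τ₄ → x - sh₂ ∈ Icc t₁' t₂' := by
    intro x h1 h2
    exact ⟨by linarith [hbt], by linarith⟩
  have hIccT12 : ∀ x : ℝ, τ₁ ≤ x → x ≤ τ₂ → x ∈ Icc (0:ℝ) T := fun x h1 h2 =>
    hIccT x (by linarith) (by linarith)
  have hIccT34 : ∀ x : ℝ, τ₃ ≤ x → x ≤ τ₄ → x ∈ Icc (0:ℝ) T := fun x h1 h2 =>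
    hIccT x (by linarith) (by linarith)
  have hIccTsh1 : ∀ x : ℝ, τ₁ ≤ x → x ≤ τ₂ → x - sh₁ ∈ Icc (0:ℝ) T := fun x h1 h2 => by
    have := hmemsh1 x h1 h2
    exact ⟨le_trans ht₁'.1 this.1, le_trans this.2 ht₂'.2⟩
  have hIccTsh2 : ∀ x : ℝ, τ₃ ≤ x → x ≤ τ₄ → x - sh₂ ∈ Icc (0:ℝ) T := fun x h1 h2 => by
    have := hmemsh2 x h1 h2
    exact ⟨le_trans ht₁'.1 this.1, le_trans this.2 ht₂'.2⟩
  have hhi2I : ∀ x : ℝ, τ₁ ≤ x → x ≤ τ₂ →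
      M (ξ' (x - sh₁)) (g' (x - sh₁)) x ≤
        M (ξ' (x - sh₁)) (g' (x - sh₁)) (x - sh₁) + (α * |g' (x - sh₁)| + β) * (8 * d) := by
    intro x h1 h2
    have hmx := hmemsh1 x h1 h2
    have hl := hlip _ (hmem' _ hmx) (g' (x - sh₁)) x (hIccT12 x h1 h2) (x - sh₁)
      (hIccTsh1 x h1 h2) (by
        rw [show x - sh₁ - x = -sh₁ by ring, abs_neg]
        linarith [hsh₁])
    have habs0 : |x - sh₁ - x| ≤ 8 * d := by
      rw [show x - sh₁ - x = -sh₁ by ring, abs_neg]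
      linarith [hsh₁]
    have hnn : 0 ≤ α * |g' (x - sh₁)| + β :=
      add_nonneg (mul_nonneg hα (abs_nonneg _)) hβ
    have := mul_le_mul_of_nonneg_left habs0 hnn
    linarith
  have hhi4I : ∀ x : ℝ, τ₃ ≤ x → x ≤ τ₄ →
      M (ξ' (x - sh₂)) (g' (x - sh₂)) x ≤
        M (ξ' (x - sh₂)) (g' (x - sh₂)) (x - sh₂) + (α * |g' (x - sh₂)| + β) * (8 * d) := by
    intro x h1 h2
    have hmx := hmemsh2 x h1 h2
    have hl := hlip _ (hmem' _ hmx) (g' (x - sh₂)) x (hIccT34 x h1 h2) (x - sh₂)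
      (hIccTsh2 x h1 h2) (by
        rw [show x - sh₂ - x = -sh₂ by ring, abs_neg]
        linarith [hsh₂])
    have habs0 : |x - sh₂ - x| ≤ 8 * d := by
      rw [show x - sh₂ - x = -sh₂ by ring, abs_neg]
      linarith [hsh₂]
    have hnn : 0 ≤ α * |g' (x - sh₂)| + β :=
      add_nonneg (mul_nonneg hα (abs_nonneg _)) hβ
    have := mul_le_mul_of_nonneg_left habs0 hnn
    linarith
  have hlo2I : ∀ x : ℝ, τ₁ ≤ x → x ≤ τ₂ → ϑ 0 ≤ M (ξ' (x - sh₁)) (g' (x - sh₁)) x :=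
    fun x h1 h2 => hmlb _ (hmem' _ (hmemsh1 x h1 h2)) _ _ (hIccT12 x h1 h2)
  have hlo4I : ∀ x : ℝ, τ₃ ≤ x → x ≤ τ₄ → ϑ 0 ≤ M (ξ' (x - sh₂)) (g' (x - sh₂)) x :=
    fun x h1 h2 => hmlb _ (hmem' _ (hmemsh2 x h1 h2)) _ _ (hIccT34 x h1 h2)
  -- integrability of upper bounds
  have hold2 : IntervalIntegrable (fun x => M (ξ' (x - sh₁)) (g' (x - sh₁)) (x - sh₁))
      volume τ₁ τ₂ := by
    have base : IntervalIntegrable (fun τ => M (ξ' τ) (g' τ) τ) volume t₁' a :=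
      hI'.mono_set' (hsubI _ _ le_rfl ha1 hat)
    have h := base.comp_sub_right sh₁
    rwa [esh1a, esh1b] at h
  have hold4 : IntervalIntegrable (fun x => M (ξ' (x - sh₂)) (g' (x - sh₂)) (x - sh₂))
      volume τ₃ τ₄ := by
    have base : IntervalIntegrable (fun τ => M (ξ' τ) (g' τ) τ) volume b t₂' :=
      hI'.mono_set' (hsubI _ _ hbt hbt2 le_rfl)
    have h := base.comp_sub_right sh₂
    rwa [esh2a, esh2b] at h
  have habs2 : IntervalIntegrable (fun x => |g' (x - sh₁)|) volume τ₁ τ₂ := by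
    have base : IntervalIntegrable (fun τ => |g' τ|) volume t₁' a :=
      habs'.mono_set' (hsubI _ _ le_rfl ha1 hat)
    have h := base.comp_sub_right sh₁
    rwa [esh1a, esh1b] at h
  have habs4 : IntervalIntegrable (fun x => |g' (x - sh₂)|) volume τ₃ τ₄ := by
    have base : IntervalIntegrable (fun τ => |g' τ|) volume b t₂' :=
      habs'.mono_set' (hsubI _ _ hbt hbt2 le_rfl)
    have h := base.comp_sub_right sh₂
    rwa [esh2a, esh2b] at h
  have hup2 : IntervalIntegrable (fun σ => M (ξ' (σ - sh₁)) (g' (σ - sh₁)) (σ - sh₁)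
      + (α * |g' (σ - sh₁)| + β) * (8 * d)) volume τ₁ τ₂ :=
    hold2.add (((habs2.const_mul α).add intervalIntegrable_const).mul_const (8 * d))
  have hup4 : IntervalIntegrable (fun σ => M (ξ' (σ - sh₂)) (g' (σ - sh₂)) (σ - sh₂)
      + (α * |g' (σ - sh₂)| + β) * (8 * d)) volume τ₃ τ₄ :=
    hold4.add (((habs4.const_mul α).add intervalIntegrable_const).mul_const (8 * d))
  -- measurability
  have hsub12 : Ι τ₁ τ₂ ⊆ Icc τ₁ τ₂ := by rw [uIoc_of_le ho2]; exact Ioc_subset_Icc_self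
  have hsub34 : Ι τ₃ τ₄ ⊆ Icc τ₃ τ₄ := by rw [uIoc_of_le ho4]; exact Ioc_subset_Icc_self
  have haesm2 : AEStronglyMeasurable (fun σ => M (ξ' (σ - sh₁)) (g' (σ - sh₁)) σ)
      (volume.restrict (Ι τ₁ τ₂)) := by
    have hg2 : AEMeasurable (fun σ => g' (σ - sh₁)) (volume.restrict (Ι τ₁ τ₂)) :=
      hshift2.def'.aestronglyMeasurable.aemeasurable
    have hξcon : ContinuousOn (fun σ => ξ' (σ - sh₁)) (Icc τ₁ τ₂) :=
      hξc.comp ((continuous_id.sub continuous_const).continuousOn)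
        (fun x hx => hmemsh1 x hx.1 hx.2)
    have hξ2 : AEMeasurable (fun σ => ξ' (σ - sh₁)) (volume.restrict (Ι τ₁ τ₂)) :=
      (hξcon.mono hsub12).aemeasurable measurableSet_uIoc
    exact (Mc.measurable.comp_aemeasurable
      (hξ2.prodMk (hg2.prodMk aemeasurable_id))).aestronglyMeasurable
  have haesm4 : AEStronglyMeasurable (fun σ => M (ξ' (σ - sh₂)) (g' (σ - sh₂)) σ)
      (volume.restrict (Ι τ₃ τ₄)) := by
    have hg2 : AEMeasurable (fun σ => g' (σ - sh₂)) (volume.restrict (Ι τ₃ τ₄)) :=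
      hshift4.def'.aestronglyMeasurable.aemeasurable
    have hξcon : ContinuousOn (fun σ => ξ' (σ - sh₂)) (Icc τ₃ τ₄) :=
      hξc.comp ((continuous_id.sub continuous_const).continuousOn)
        (fun x hx => hmemsh2 x hx.1 hx.2)
    have hξ2 : AEMeasurable (fun σ => ξ' (σ - sh₂)) (volume.restrict (Ι τ₃ τ₄)) :=
      (hξcon.mono hsub34).aemeasurable measurableSet_uIoc
    exact (Mc.measurable.comp_aemeasurable
      (hξ2.prodMk (hg2.prodMk aemeasurable_id))).aestronglyMeasurable
  have hIf₂ : IntervalIntegrable (fun σ => M (ξ' (σ - sh₁)) (g' (σ - sh₁)) σ) volume τ₁ τ₂ :=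
    ii_sandwich haesm2 intervalIntegrable_const hup2
      (fun x hx => hlo2I x (hsub12 hx).1 (hsub12 hx).2)
      (fun x hx => hhi2I x (hsub12 hx).1 (hsub12 hx).2)
  have hIf₄ : IntervalIntegrable (fun σ => M (ξ' (σ - sh₂)) (g' (σ - sh₂)) σ) volume τ₃ τ₄ :=
    ii_sandwich haesm4 intervalIntegrable_const hup4
      (fun x hx => hlo4I x (hsub34 hx).1 (hsub34 hx).2)
      (fun x hx => hhi4I x (hsub34 hx).1 (hsub34 hx).2)
  have pF2 : IntervalIntegrable (fun σ => M (xt σ) (gt σ) σ) volume τ₁ τ₂ :=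
    ii_congr hIf₂ (fun x hx => by
      rw [uIoc_of_le ho2] at hx
      rw [hxt2 x hx.1 hx.2, hgt2 x hx.1 hx.2])
  have pF4 : IntervalIntegrable (fun σ => M (xt σ) (gt σ) σ) volume τ₃ τ₄ :=
    ii_congr hIf₄ (fun x hx => by
      rw [uIoc_of_le ho4] at hx
      rw [hxt4 x hx.1 hx.2, hgt4 x hx.1 hx.2])
  have pF : IntervalIntegrable (fun σ => M (xt σ) (gt σ) σ) volume t₁ t₂ :=
    (((pF1.trans pF2).trans pF3).trans pF4).trans pF5
  ---- membership of the new value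
  have hVmem : (∫ σ in t₁..t₂, M (xt σ) (gt σ) σ) ∈ aset M ℓ s₁ t₁ s₂ t₂ :=
    ⟨xt, gt, pgt, hint_new, hmem_new, he1_new, he2_new, pF, rfl⟩
  
  ---- value bounds on each piece
  have hmax0 : (0:ℝ) ≤ max cstar 1 := le_trans zero_le_one (le_max_right cstar 1)
  have hB1 : (∫ σ in t₁..τ₁, M (xt σ) (gt σ) σ) ≤ Θcap * d := by
    have ec : (∫ σ in t₁..τ₁, M (xt σ) (gt σ) σ)
        = ∫ σ in t₁..τ₁, M (s₁ + (σ - t₁) * c₁) c₁ σ :=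
      intervalIntegral.integral_congr_ae (Eventually.of_forall fun x hx => by
        rw [uIoc_of_le ho1.le] at hx
        rw [hxt1 x hx.2, hgt1 x hx.2])
    have hmono : ∀ x ∈ Icc t₁ τ₁, M (s₁ + (x - t₁) * c₁) c₁ x ≤ Θcap := by
      intro x hx
      have hmx : s₁ + (x - t₁) * c₁ ∈ Icc 0 ℓ := by
        rw [hc₁def]
        exact seg_mem hs₁ hs₁' hd0 ⟨by linarith [hx.1], by linarith [hτ₁def, hx.2]⟩
      refine le_trans (hbd _ hmx c₁ x (hIccT x hx.1 (by linarith [hx.2]))).2 ?_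
      exact le_trans (hΘmono (mem_Ici.mpr (abs_nonneg _)) (mem_Ici.mpr hmax0)
        (hc₁.trans (le_max_right cstar 1))) (le_max_left _ _)
    rw [ec]
    have h2 := intervalIntegral.integral_mono_on (μ := volume) ho1.le
      (hf₁c.intervalIntegrable _ _) intervalIntegrable_const hmono
    rw [intervalIntegral.integral_const, smul_eq_mul] at h2
    have e : τ₁ - t₁ = d := by rw [hτ₁def]; ring
    rw [e] at h2
    linarith [h2]
  have hB3 : (∫ σ in τ₂..τ₃, M (xt σ) (gt σ) σ) ≤ Θcap * (8 * d) := by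
    have ec : (∫ σ in τ₂..τ₃, M (xt σ) (gt σ) σ)
        = ∫ σ in τ₂..τ₃, M (ξ' a + (σ - τ₂) * c₃) c₃ σ :=
      intervalIntegral.integral_congr_ae (Eventually.of_forall fun x hx => by
        rw [uIoc_of_le ho3.le] at hx
        rw [hxt3 x hx.1 hx.2, hgt3 x hx.1 hx.2])
    have hmono : ∀ x ∈ Icc τ₂ τ₃, M (ξ' a + (x - τ₂) * c₃) c₃ x ≤ Θcap := by
      intro x hx
      have hmx : ξ' a + (x - τ₂) * c₃ ∈ Icc 0 ℓ := by
        rw [hc₃def]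
        exact seg_mem (hmem' a ⟨ha1, hat⟩) (hmem' b ⟨hbt, hbt2⟩) h8Dpos
          ⟨by linarith [hx.1], by linarith [hτ₃def, hx.2]⟩
      refine le_trans (hbd _ hmx c₃ x (hIccT x (by linarith [hx.1]) (by linarith [hx.2]))).2 ?_
      exact le_trans (hΘmono (mem_Ici.mpr (abs_nonneg _)) (mem_Ici.mpr hmax0)
        (hc₃.trans (le_max_left cstar 1))) (le_max_left _ _)
    rw [ec]
    have h2 := intervalIntegral.integral_mono_on (μ := volume) ho3.le
      (hf₃c.intervalIntegrable _ _) intervalIntegrable_const hmono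
    rw [intervalIntegral.integral_const, smul_eq_mul] at h2
    have e : τ₃ - τ₂ = 8 * d - D := by rw [hτ₃def]; ring
    rw [e] at h2
    have h3 : (8 * d - D) * Θcap ≤ (8 * d) * Θcap :=
      mul_le_mul_of_nonneg_right (by linarith) hΘcap0
    linarith
  have hB5 : (∫ σ in τ₄..t₂, M (xt σ) (gt σ) σ) ≤ Θcap * d := by
    have ec : (∫ σ in τ₄..t₂, M (xt σ) (gt σ) σ)
        = ∫ σ in τ₄..t₂, M (s₂' + (σ - τ₄) * c₅) c₅ σ :=
      intervalIntegral.integral_congr_ae (Eventually.of_forall fun x hx => by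
        rw [uIoc_of_le ho5.le] at hx
        rw [hxt5 x hx.1, hgt5 x hx.1])
    have hmono : ∀ x ∈ Icc τ₄ t₂, M (s₂' + (x - τ₄) * c₅) c₅ x ≤ Θcap := by
      intro x hx
      have hmx : s₂' + (x - τ₄) * c₅ ∈ Icc 0 ℓ := by
        rw [hc₅def]
        exact seg_mem hs₂' hs₂ hd0 ⟨by linarith [hx.1], by linarith [hτ₄, hx.2]⟩
      refine le_trans (hbd _ hmx c₅ x (hIccT x (by linarith [hx.1]) hx.2)).2 ?_
      exact le_trans (hΘmono (mem_Ici.mpr (abs_nonneg _)) (mem_Ici.mpr hmax0)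
        (hc₅.trans (le_max_right cstar 1))) (le_max_left _ _)
    rw [ec]
    have h2 := intervalIntegral.integral_mono_on (μ := volume) ho5.le
      (hf₅c.intervalIntegrable _ _) intervalIntegrable_const hmono
    rw [intervalIntegral.integral_const, smul_eq_mul] at h2
    have e : t₂ - τ₄ = d := by rw [hτ₄]; ring
    rw [e] at h2
    linarith
  have hB2 : (∫ σ in τ₁..τ₂, M (xt σ) (gt σ) σ) ≤
      (∫ u in t₁'..a, M (ξ' u) (g' u) u) + (∫ u in t₁'..a, (α * |g' u| + β)) * (8 * d) := by
    have ec : (∫ σ in τ₁..τ₂, M (xt σ) (gt σ) σ)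
        = ∫ σ in τ₁..τ₂, M (ξ' (σ - sh₁)) (g' (σ - sh₁)) σ :=
      intervalIntegral.integral_congr_ae (Eventually.of_forall fun x hx => by
        rw [uIoc_of_le ho2] at hx
        rw [hxt2 x hx.1 hx.2, hgt2 x hx.1 hx.2])
    have h2 := intervalIntegral.integral_mono_on ho2 hIf₂ hup2
      (fun x hx => hhi2I x hx.1 hx.2)
    have h3 : (∫ σ in τ₁..τ₂, (M (ξ' (σ - sh₁)) (g' (σ - sh₁)) (σ - sh₁)
        + (α * |g' (σ - sh₁)| + β) * (8 * d)))
        = (∫ u in t₁'..a, M (ξ' u) (g' u) u)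
          + (∫ u in t₁'..a, (α * |g' u| + β)) * (8 * d) := by
      rw [intervalIntegral.integral_add hold2
        (((habs2.const_mul α).add intervalIntegrable_const).mul_const (8 * d))]
      have ecv1 : (∫ σ in τ₁..τ₂, M (ξ' (σ - sh₁)) (g' (σ - sh₁)) (σ - sh₁))
          = ∫ u in (τ₁ - sh₁)..(τ₂ - sh₁), M (ξ' u) (g' u) u :=
        intervalIntegral.integral_comp_sub_right (fun u => M (ξ' u) (g' u) u) sh₁
      have ecv2 : (∫ σ in τ₁..τ₂, (α * |g' (σ - sh₁)| + β))
          = ∫ u in (τ₁ - sh₁)..(τ₂ - sh₁), (α * |g' u| + β) :=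
        intervalIntegral.integral_comp_sub_right (fun u => α * |g' u| + β) sh₁
      rw [intervalIntegral.integral_mul_const, ecv1, ecv2, esh1a', esh1b']
    rw [ec]
    rw [h3] at h2
    exact h2
  have hB4 : (∫ σ in τ₃..τ₄, M (xt σ) (gt σ) σ) ≤
      (∫ u in b..t₂', M (ξ' u) (g' u) u) + (∫ u in b..t₂', (α * |g' u| + β)) * (8 * d) := by
    have ec : (∫ σ in τ₃..τ₄, M (xt σ) (gt σ) σ)
        = ∫ σ in τ₃..τ₄, M (ξ' (σ - sh₂)) (g' (σ - sh₂)) σ :=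
      intervalIntegral.integral_congr_ae (Eventually.of_forall fun x hx => by
        rw [uIoc_of_le ho4] at hx
        rw [hxt4 x hx.1 hx.2, hgt4 x hx.1 hx.2])
    have h2 := intervalIntegral.integral_mono_on ho4 hIf₄ hup4
      (fun x hx => hhi4I x hx.1 hx.2)
    have h3 : (∫ σ in τ₃..τ₄, (M (ξ' (σ - sh₂)) (g' (σ - sh₂)) (σ - sh₂)
        + (α * |g' (σ - sh₂)| + β) * (8 * d)))
        = (∫ u in b..t₂', M (ξ' u) (g' u) u)
          + (∫ u in b..t₂', (α * |g' u| + β)) * (8 * d) := by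
      rw [intervalIntegral.integral_add hold4
        (((habs4.const_mul α).add intervalIntegrable_const).mul_const (8 * d))]
      have ecv1 : (∫ σ in τ₃..τ₄, M (ξ' (σ - sh₂)) (g' (σ - sh₂)) (σ - sh₂))
          = ∫ u in (τ₃ - sh₂)..(τ₄ - sh₂), M (ξ' u) (g' u) u :=
        intervalIntegral.integral_comp_sub_right (fun u => M (ξ' u) (g' u) u) sh₂
      have ecv2 : (∫ σ in τ₃..τ₄, (α * |g' (σ - sh₂)| + β))
          = ∫ u in (τ₃ - sh₂)..(τ₄ - sh₂), (α * |g' u| + β) :=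
        intervalIntegral.integral_comp_sub_right (fun u => α * |g' u| + β) sh₂
      rw [intervalIntegral.integral_mul_const, ecv1, ecv2, esh2a', esh2b']
    rw [ec]
    rw [h3] at h2
    exact h2
  ---- bounds on the error integrals
  have hEnn : ∀ u : ℝ, 0 ≤ α * |g' u| + β := fun u =>
    add_nonneg (mul_nonneg hα (abs_nonneg _)) hβ
  have hEtot : (∫ u in t₁'..t₂', (α * |g' u| + β)) = α * I0 + β * (t₂' - t₁') := by
    rw [intervalIntegral.integral_add (habs'.const_mul α) intervalIntegrable_const,
      intervalIntegral.integral_const_mul, intervalIntegral.integral_const, smul_eq_mul,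
      hI0def]
    ring
  have hEa : (∫ u in t₁'..a, (α * |g' u| + β)) ≤ α * I0 + β * (t₂' - t₁') := by
    have hIA : IntervalIntegrable (fun u => α * |g' u| + β) volume t₁' a :=
      ((habs'.mono_set' (hsubI _ _ le_rfl ha1 hat)).const_mul α).add intervalIntegrable_const
    have hIB : IntervalIntegrable (fun u => α * |g' u| + β) volume a t₂' :=
      ((habs'.mono_set' (hsubI _ _ ha1 hat le_rfl)).const_mul α).add intervalIntegrable_const
    have hadd := intervalIntegral.integral_add_adjacent_intervals hIA hIB
    have hnn : 0 ≤ ∫ u in a..t₂', (α * |g' u| + β) :=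
      intervalIntegral.integral_nonneg hat (fun u _ => hEnn u)
    linarith [hEtot]
  have hEb : (∫ u in b..t₂', (α * |g' u| + β)) ≤ α * I0 + β * (t₂' - t₁') := by
    have hIA : IntervalIntegrable (fun u => α * |g' u| + β) volume t₁' b :=
      ((habs'.mono_set' (hsubI _ _ le_rfl hbt hbt2)).const_mul α).add intervalIntegrable_const
    have hIB : IntervalIntegrable (fun u => α * |g' u| + β) volume b t₂' :=
      ((habs'.mono_set' (hsubI _ _ hbt hbt2 le_rfl)).const_mul α).add intervalIntegrable_const
    have hadd := intervalIntegral.integral_add_adjacent_intervals hIA hIB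
    have hnn : 0 ≤ ∫ u in t₁'..b, (α * |g' u| + β) :=
      intervalIntegral.integral_nonneg hbt (fun u _ => hEnn u)
    linarith [hEtot]
  have hEbound : α * I0 + β * (t₂' - t₁') ≤ α * (G₁ * T + T) + β * T := by
    have m1 := mul_le_mul_of_nonneg_left hGT hα
    have m2 : β * (t₂' - t₁') ≤ β * T :=
      mul_le_mul_of_nonneg_left (by linarith [ht₂'.2, ht₁'.1]) hβ
    linarith
  have hEa8 : (∫ u in t₁'..a, (α * |g' u| + β)) * (8 * d)
      ≤ (α * (G₁ * T + T) + β * T) * (8 * d) :=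
    mul_le_mul_of_nonneg_right (hEa.trans hEbound) (by linarith)
  have hEb8 : (∫ u in b..t₂', (α * |g' u| + β)) * (8 * d)
      ≤ (α * (G₁ * T + T) + β * T) * (8 * d) :=
    mul_le_mul_of_nonneg_right (hEb.trans hEbound) (by linarith)
  ---- the middle part of the old curve
  have hMid : ϑ 0 * (8 * d) ≤ ∫ u in a..b, M (ξ' u) (g' u) u := by
    have e : ϑ 0 * (8 * d) = ∫ _ in a..b, ϑ 0 := by
      rw [intervalIntegral.integral_const, smul_eq_mul,
        show b - a = 8 * d by rw [hbdef]; ring]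
      ring
    rw [e]
    exact intervalIntegral.integral_mono_on hab intervalIntegrable_const
      (hI'.mono_set' (hsubI _ _ ha1 hab hbt2))
      (fun u hu => hmlb _ (hmem' u ⟨le_trans ha1 hu.1, le_trans hu.2 hbt2⟩) _ _
        ⟨le_trans ht₁'.1 (le_trans ha1 hu.1), le_trans (le_trans hu.2 hbt2) ht₂'.2⟩)
  have hMid' : -(∫ u in a..b, M (ξ' u) (g' u) u) ≤ 8 * |ϑ 0| * d := by
    have m : (-(ϑ 0)) * (8 * d) ≤ |ϑ 0| * (8 * d) :=
      mul_le_mul_of_nonneg_right (by linarith [neg_abs_le (ϑ 0)]) (by linarith)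
    linarith [hMid, m]
  have hsplitv : (∫ u in t₁'..a, M (ξ' u) (g' u) u) + (∫ u in a..b, M (ξ' u) (g' u) u)
      + (∫ u in b..t₂', M (ξ' u) (g' u) u) = v := by
    have h1 := intervalIntegral.integral_add_adjacent_intervals
      (hI'.mono_set' (hsubI _ _ le_rfl ha1 hat)) (hI'.mono_set' (hsubI _ _ ha1 hab hbt2))
    have h2 := intervalIntegral.integral_add_adjacent_intervals
      (hI'.mono_set' (hsubI _ _ le_rfl hbt hbt2)) (hI'.mono_set' (hsubI _ _ hbt hbt2 le_rfl))
    rw [hveq']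
    linarith
  ---- total decomposition
  have e12 := intervalIntegral.integral_add_adjacent_intervals pF1 pF2
  have e23 := intervalIntegral.integral_add_adjacent_intervals (pF1.trans pF2) pF3
  have e34 := intervalIntegral.integral_add_adjacent_intervals
    ((pF1.trans pF2).trans pF3) pF4
  have e45 := intervalIntegral.integral_add_adjacent_intervals
    (((pF1.trans pF2).trans pF3).trans pF4) pF5
  have hΦle := csInf_le hbdd hVmem
  have eK : (1 + 8 * |ϑ 0| + 10 * Θcap + 16 * (α * (G₁ * T + T) + β * T)) * d
      = d + 8 * |ϑ 0| * d + 10 * (Θcap * d) + 2 * ((α * (G₁ * T + T) + β * T) * (8 * d)) := by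
    ring
  have eΘ8 : Θcap * (8 * d) = 8 * (Θcap * d) := by ring
  rw [eK]
  rw [eΘ8] at hB3
  linarith [hΦle, hB1, hB2, hB3, hB4, hB5, hEa8, hEb8, hMid', hsplitv, hvlt,
    e12, e23, e34, e45]

set_option maxHeartbeats 1000000 in
/-- the minimal action `Φ` is Lipschitz continuous on
`A_C = { (s₁, t₁, s₂, t₂) ∈ ([0, ℓ] × [0, T])² : |s₁ − s₂| ≤ C (t₂ − t₁) }`
(Corollary `minactlip` of the paper). -/
theorem minAction_lipschitz (ℓ : ℝ) (hℓ : 0 < ℓ) (L : ℝ → ℝ → ℝ → ℝ)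
    (Lcont : ContinuousOn (fun p : ℝ × ℝ × ℝ => L p.1 p.2.1 p.2.2)
      (Icc 0 ℓ ×ˢ (univ : Set ℝ) ×ˢ Ici 0))
    (Lconv : ∀ s ∈ Icc 0 ℓ, ∀ t ∈ Ici (0:ℝ), ConvexOn ℝ univ (fun lam => L s lam t))
    (Lcoer : ∀ T > (0:ℝ), ∃ ϑ Θ : ℝ → ℝ,
      MonotoneOn ϑ (Ici 0) ∧ ConvexOn ℝ (Ici 0) ϑ ∧ Superlinear ϑ ∧
      MonotoneOn Θ (Ici 0) ∧ ConvexOn ℝ (Ici 0) Θ ∧ Superlinear Θ ∧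
      ∀ s ∈ Icc 0 ℓ, ∀ lam : ℝ, ∀ t ∈ Icc 0 T, ϑ |lam| ≤ L s lam t ∧ L s lam t ≤ Θ |lam|)
    (Ltlip : ∀ T > (0:ℝ), ∃ α β : ℝ, 0 ≤ α ∧ 0 ≤ β ∧ ∃ ε ∈ Ioc 0 T,
      ∀ s ∈ Icc 0 ℓ, ∀ lam : ℝ, ∀ t₁ ∈ Icc 0 T, ∀ t₂ ∈ Icc 0 T, |t₂ - t₁| < ε →
        L s lam t₁ - L s lam t₂ ≤ (α * |lam| + β) * |t₂ - t₁|)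
    (T C : ℝ) (hT : 0 < T) (hC : 0 < C) :
    ∃ K : ℝ,
      ∀ s₁ ∈ Icc 0 ℓ, ∀ s₂ ∈ Icc 0 ℓ, ∀ t₁ ∈ Icc 0 T, ∀ t₂ ∈ Icc 0 T,
        |s₁ - s₂| ≤ C * (t₂ - t₁) →
      ∀ s₁' ∈ Icc 0 ℓ, ∀ s₂' ∈ Icc 0 ℓ, ∀ t₁' ∈ Icc 0 T, ∀ t₂' ∈ Icc 0 T,
        |s₁' - s₂'| ≤ C * (t₂' - t₁') →
        |minAction L ℓ s₁ t₁ s₂ t₂ - minAction L ℓ s₁' t₁' s₂' t₂'| ≤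
          K * (|s₁ - s₁'| + |t₁ - t₁'| + |s₂ - s₂'| + |t₂ - t₂'|) := by
  classical
  -- Tietze extension of L to a globally continuous function
  obtain ⟨Mf, hMfc, hMfeq⟩ : ∃ Mf : ℝ × ℝ × ℝ → ℝ, Continuous Mf ∧
      ∀ p ∈ (Icc 0 ℓ ×ˢ (univ : Set ℝ) ×ˢ Ici 0), Mf p = L p.1 p.2.1 p.2.2 := by
    have hcl : IsClosed (Icc (0:ℝ) ℓ ×ˢ (univ : Set ℝ) ×ˢ Ici (0:ℝ)) :=
      isClosed_Icc.prod (isClosed_univ.prod isClosed_Ici)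
    obtain ⟨g, hg⟩ := ContinuousMap.exists_restrict_eq hcl ⟨_, Lcont.restrict⟩
    refine ⟨g, g.continuous, fun p hp => ?_⟩
    have := DFunLike.congr_fun hg ⟨p, hp⟩
    simpa using this
  set M : ℝ → ℝ → ℝ → ℝ := fun s lam t => Mf (s, lam, t) with hMdef
  have hMc : Continuous fun p : ℝ × ℝ × ℝ => M p.1 p.2.1 p.2.2 := hMfc
  have hLM : ∀ s ∈ Icc 0 ℓ, ∀ lam : ℝ, ∀ t : ℝ, 0 ≤ t → L s lam t = M s lam t := by
    intro s hs lam t ht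
    exact (hMfeq (s, lam, t) ⟨hs, ⟨mem_univ _, ht⟩⟩).symm
  obtain ⟨ϑ, Θ, hϑmono, _hϑconv, hϑsl, hΘmono, _, _, hbdL⟩ := Lcoer T hT
  have hbd : ∀ s ∈ Icc 0 ℓ, ∀ lam : ℝ, ∀ t ∈ Icc (0:ℝ) T,
      ϑ |lam| ≤ M s lam t ∧ M s lam t ≤ Θ |lam| := by
    intro s hs lam t ht
    rw [← hLM s hs lam t ht.1]
    exact hbdL s hs lam t ht
  obtain ⟨α, β, hα, hβ, ε, hεIoc, hlipL⟩ := Ltlip T hT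
  have hε : 0 < ε := hεIoc.1
  have hεT : ε ≤ T := hεIoc.2
  have hlip : ∀ s ∈ Icc 0 ℓ, ∀ lam : ℝ, ∀ u ∈ Icc (0:ℝ) T, ∀ w ∈ Icc (0:ℝ) T, |w - u| < ε →
      M s lam u - M s lam w ≤ (α * |lam| + β) * |w - u| := by
    intro s hs lam u hu w hw h
    rw [← hLM s hs lam u hu.1, ← hLM s hs lam w hw.1]
    exact hlipL s hs lam u hu w hw h
  -- superlinearity gives r₀
  obtain ⟨r₁, hr₁⟩ := eventually_atTop.mp (hϑsl.eventually_ge_atTop 1)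
  set r₀ : ℝ := max r₁ 1 with hr₀def
  have hr₀0 : 0 ≤ r₀ := le_trans zero_le_one (le_max_right _ _)
  have hr₀ : ∀ r, r₀ ≤ r → r ≤ ϑ r := by
    intro r hr
    have h1 := hr₁ r (le_trans (le_max_left _ _) hr)
    have hrpos : 0 < r := lt_of_lt_of_le (lt_of_lt_of_le one_pos (le_max_right r₁ 1)) hr
    exact (one_le_div hrpos).mp h1
  have hmlb : ∀ s ∈ Icc 0 ℓ, ∀ lam : ℝ, ∀ t ∈ Icc (0:ℝ) T, ϑ 0 ≤ M s lam t := by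
    intro s hs lam t ht
    exact le_trans (hϑmono (mem_Ici.mpr le_rfl) (mem_Ici.mpr (abs_nonneg _)) (abs_nonneg _))
      (hbd s hs lam t ht).1
  -- constants
  set B : ℝ := max (max (Θ C) 0) |ϑ 0| with hBdef
  have hB0 : 0 ≤ B := le_trans (le_max_right (Θ C) 0) (le_max_left _ _)
  set Kmain : ℝ := 1 + 8 * |ϑ 0| +
    10 * max (Θ (max (4 * (r₀ + 2 * |ϑ 0| + max (Θ C) 0) + 1) 1)) 0 +
    16 * (α * ((r₀ + 2 * |ϑ 0| + max (Θ C) 0) * T + T) + β * T) with hKmaindef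
  have hKmain0 : 0 ≤ Kmain := by
    rw [hKmaindef]
    have h1 : (0:ℝ) ≤ max (Θ (max (4 * (r₀ + 2 * |ϑ 0| + max (Θ C) 0) + 1) 1)) 0 :=
      le_max_right _ _
    have h2 : (0:ℝ) ≤ (r₀ + 2 * |ϑ 0| + max (Θ C) 0) * T + T := by
      have : (0:ℝ) ≤ r₀ + 2 * |ϑ 0| + max (Θ C) 0 := by
        have := abs_nonneg (ϑ 0); have := le_max_right (Θ C) (0:ℝ); linarith
      nlinarith [hT.le]
    have h3 : (0:ℝ) ≤ α * ((r₀ + 2 * |ϑ 0| + max (Θ C) 0) * T + T) := mul_nonneg hα h2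
    have h4 : (0:ℝ) ≤ β * T := mul_nonneg hβ hT.le
    have := abs_nonneg (ϑ 0)
    linarith
  -- uniform bound on |sInf (aset ...)|
  have hPhiB : ∀ x₁ ∈ Icc 0 ℓ, ∀ x₂ ∈ Icc 0 ℓ, ∀ u₁ ∈ Icc (0:ℝ) T, ∀ u₂ ∈ Icc (0:ℝ) T,
      |x₁ - x₂| ≤ C * (u₂ - u₁) →
      |sInf (aset M ℓ x₁ u₁ x₂ u₂)| ≤ B * (u₂ - u₁) := by
    intro x₁ hx₁ x₂ hx₂ u₁ hu₁ u₂ hu₂ hACx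
    have h0 : 0 ≤ C * (u₂ - u₁) := le_trans (abs_nonneg _) hACx
    have hu12 : u₁ ≤ u₂ := by
      have := le_of_mul_le_mul_left (by linarith : C * 0 ≤ C * (u₂ - u₁)) hC
      linarith
    have hbddx : BddBelow (aset M ℓ x₁ u₁ x₂ u₂) := aset_bddBelow hu12 hu₁.1 hu₂.2 hmlb
    have hnex := aset_nonempty hMc hx₁ hx₂ hC hACx
    have hub := sInf_aset_le hMc hΘmono (fun s hs lam t ht => (hbd s hs lam t ht).2) hbddx
      hx₁ hx₂ hu₁.1 hu₂.2 hC hACx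
    have hlb := le_csInf hnex (aset_lower hu12 hu₁.1 hu₂.2 hmlb)
    rw [abs_le]
    constructor
    · have m1 : -B ≤ ϑ 0 := by
        have := neg_abs_le (ϑ 0)
        have := le_trans (le_max_right (max (Θ C) 0) |ϑ 0|) (le_refl B)
        have hB2 : |ϑ 0| ≤ B := le_max_right _ _
        linarith
      have m2 : (-B) * (u₂ - u₁) ≤ ϑ 0 * (u₂ - u₁) :=
        mul_le_mul_of_nonneg_right m1 (by linarith)
      linarith
    · have m1 : Θ C ≤ B := le_trans (le_max_left (Θ C) 0) (le_max_left _ _)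
      have m2 : Θ C * (u₂ - u₁) ≤ B * (u₂ - u₁) :=
        mul_le_mul_of_nonneg_right m1 (by linarith)
      linarith
  refine ⟨Kmain + 18 * B * T / ε + 86 * B, ?_⟩
  intro s₁ hs₁ s₂ hs₂ t₁ ht₁ t₂ ht₂ hAC s₁' hs₁' s₂' hs₂' t₁' ht₁' t₂' ht₂' hAC'
  have h0 : 0 ≤ C * (t₂ - t₁) := le_trans (abs_nonneg _) hAC
  have ht12 : t₁ ≤ t₂ := by
    have := le_of_mul_le_mul_left (by linarith : C * 0 ≤ C * (t₂ - t₁)) hC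
    linarith
  have h0' : 0 ≤ C * (t₂' - t₁') := le_trans (abs_nonneg _) hAC'
  have ht12' : t₁' ≤ t₂' := by
    have := le_of_mul_le_mul_left (by linarith : C * 0 ≤ C * (t₂' - t₁')) hC
    linarith
  have hEq1 : minAction L ℓ s₁ t₁ s₂ t₂ = sInf (aset M ℓ s₁ t₁ s₂ t₂) := by
    rw [minAction_eq_sInf, aset_eq hLM ht₁.1 ht12]
  have hEq2 : minAction L ℓ s₁' t₁' s₂' t₂' = sInf (aset M ℓ s₁' t₁' s₂' t₂') := by
    rw [minAction_eq_sInf, aset_eq hLM ht₁'.1 ht12']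
  rw [hEq1, hEq2]
  set dd : ℝ := |s₁ - s₁'| + |t₁ - t₁'| + |s₂ - s₂'| + |t₂ - t₂'| with hdddef
  have hdd0 : 0 ≤ dd := by positivity
  have hd1 : |s₁ - s₁'| ≤ dd := by
    have := abs_nonneg (t₁ - t₁'); have := abs_nonneg (s₂ - s₂'); have := abs_nonneg (t₂ - t₂')
    rw [hdddef]; linarith
  have hd2 : |t₁ - t₁'| ≤ dd := by
    have := abs_nonneg (s₁ - s₁'); have := abs_nonneg (s₂ - s₂'); have := abs_nonneg (t₂ - t₂')
    rw [hdddef]; linarith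
  have hd3 : |s₂ - s₂'| ≤ dd := by
    have := abs_nonneg (s₁ - s₁'); have := abs_nonneg (t₁ - t₁'); have := abs_nonneg (t₂ - t₂')
    rw [hdddef]; linarith
  have hd4 : |t₂ - t₂'| ≤ dd := by
    have := abs_nonneg (s₁ - s₁'); have := abs_nonneg (t₁ - t₁'); have := abs_nonneg (s₂ - s₂')
    rw [hdddef]; linarith
  have hPhi1 := hPhiB s₁ hs₁ s₂ hs₂ t₁ ht₁ t₂ ht₂ hAC
  have hPhi2 := hPhiB s₁' hs₁' s₂' hs₂' t₁' ht₁' t₂' ht₂' hAC'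
  clear_value dd B Kmain
  have hterm2 : 0 ≤ 18 * B * T / ε * dd :=
    mul_nonneg (div_nonneg (mul_nonneg (mul_nonneg (by norm_num) hB0) hT.le) hε.le) hdd0
  have hterm3 : 0 ≤ 86 * B * dd := mul_nonneg (mul_nonneg (by norm_num) hB0) hdd0
  have hterm1 : 0 ≤ Kmain * dd := mul_nonneg hKmain0 hdd0
  have eexp : (Kmain + 18 * B * T / ε + 86 * B) * dd
      = Kmain * dd + 18 * B * T / ε * dd + 86 * B * dd := by ring
  rw [eexp]
  rcases eq_or_lt_of_le hdd0 with hdd | hddpos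
  · -- dd = 0: all coordinates coincide
    have e1 : s₁ = s₁' := by
      have h := abs_eq_zero.mp (le_antisymm (by linarith [hd1]) (abs_nonneg (s₁ - s₁')))
      linarith [sub_eq_zero.mp h]
    have e2 : t₁ = t₁' := by
      have h := abs_eq_zero.mp (le_antisymm (by linarith [hd2]) (abs_nonneg (t₁ - t₁')))
      linarith [sub_eq_zero.mp h]
    have e3 : s₂ = s₂' := by
      have h := abs_eq_zero.mp (le_antisymm (by linarith [hd3]) (abs_nonneg (s₂ - s₂')))
      linarith [sub_eq_zero.mp h]
    have e4 : t₂ = t₂' := by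
      have h := abs_eq_zero.mp (le_antisymm (by linarith [hd4]) (abs_nonneg (t₂ - t₂')))
      linarith [sub_eq_zero.mp h]
    rw [e1, e2, e3, e4, sub_self, abs_zero]
    linarith only [hterm1, hterm2, hterm3]
  · by_cases hcase : 9 * dd < ε ∧ 42 * dd ≤ t₂ - t₁
    · -- main case: apply `key` in both directions
      obtain ⟨hc9, hc42⟩ := hcase
      obtain ⟨h2a, h2b⟩ := abs_le.mp hd2
      obtain ⟨h4a, h4b⟩ := abs_le.mp hd4
      have h1 := key hT hC hMc hϑmono hΘmono hbd hr₀0 hr₀ hα hβ hε hεT hlip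
        hs₁ hs₂ hs₁' hs₂' ht₁ ht₂ ht₁' ht₂' hAC hAC' (le_of_eq hdddef.symm) hddpos hc9
        (by linarith)
      have hsum' : |s₁' - s₁| + |t₁' - t₁| + |s₂' - s₂| + |t₂' - t₂| ≤ dd := by
        rw [abs_sub_comm s₁' s₁, abs_sub_comm t₁' t₁, abs_sub_comm s₂' s₂, abs_sub_comm t₂' t₂]
        rw [hdddef]
      have h2 := key hT hC hMc hϑmono hΘmono hbd hr₀0 hr₀ hα hβ hε hεT hlip
        hs₁' hs₂' hs₁ hs₂ ht₁' ht₂' ht₁ ht₂ hAC' hAC hsum' hddpos hc9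
        (by linarith)
      have habs : |sInf (aset M ℓ s₁ t₁ s₂ t₂) - sInf (aset M ℓ s₁' t₁' s₂' t₂')|
          ≤ Kmain * dd := by
        rw [abs_sub_le_iff]
        constructor
        · rw [hKmaindef]; linarith only [h1]
        · rw [hKmaindef]; linarith only [h2]
      linarith only [habs, hterm2, hterm3]
    · -- degenerate cases
      by_cases hc2 : 9 * dd < ε
      · -- then t₂ - t₁ < 42 dd and t₂' - t₁' ≤ 44 dd
        have hshort : t₂ - t₁ < 42 * dd := by
          by_contra hcon
          exact hcase ⟨hc2, by linarith [not_lt.mp hcon]⟩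
        obtain ⟨h2a, h2b⟩ := abs_le.mp hd2
        obtain ⟨h4a, h4b⟩ := abs_le.mp hd4
        have hshort' : t₂' - t₁' ≤ 44 * dd := by linarith
        have m1 : B * (t₂ - t₁) ≤ B * (42 * dd) :=
          mul_le_mul_of_nonneg_left (by linarith) hB0
        have m2 : B * (t₂' - t₁') ≤ B * (44 * dd) :=
          mul_le_mul_of_nonneg_left hshort' hB0
        have htri := abs_sub (sInf (aset M ℓ s₁ t₁ s₂ t₂)) (sInf (aset M ℓ s₁' t₁' s₂' t₂'))
        have : |sInf (aset M ℓ s₁ t₁ s₂ t₂) - sInf (aset M ℓ s₁' t₁' s₂' t₂')|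
            ≤ 86 * B * dd := by
          have e : B * (42 * dd) + B * (44 * dd) = 86 * B * dd := by ring
          linarith only [hPhi1, hPhi2, htri, m1, m2, e]
        linarith only [this, hterm1, hterm2]
      · -- ε ≤ 9 dd
        have h9 : ε ≤ 9 * dd := not_lt.mp hc2
        have mT1 : B * (t₂ - t₁) ≤ B * T :=
          mul_le_mul_of_nonneg_left (by linarith [ht₂.2, ht₁.1]) hB0
        have mT2 : B * (t₂' - t₁') ≤ B * T :=
          mul_le_mul_of_nonneg_left (by linarith [ht₂'.2, ht₁'.1]) hB0
        have htri := abs_sub (sInf (aset M ℓ s₁ t₁ s₂ t₂)) (sInf (aset M ℓ s₁' t₁' s₂' t₂'))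
        have hdiv : 2 * (B * T) ≤ 18 * B * T / ε * dd := by
          rw [div_mul_eq_mul_div, le_div_iff₀ hε]
          have m := mul_le_mul_of_nonneg_left h9 (mul_nonneg (mul_nonneg
            (by norm_num : (0:ℝ) ≤ 2) hB0) hT.le)
          linarith only [m]
        linarith only [hPhi1, hPhi2, htri, hdiv, mT1, mT2, hterm1, hterm3]
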